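/- arXiv:1407.6650 — 4 statements merged into one kernel-verified Lean document; each statement's English description precedes it below -/
import Mathlib

section
/- In the low temperature regime with parameters k and c, with k > 1 and c > 2, there exists L₀ such that for all L ≥ L₀ and every configuration σ ∈ S different from the all-plus configuration 1 and the all-minus configuration −1, one has g(σ) > π_G(g), where g is the normalized density (which satisfies g(1) = g(−1) = 1); in particular g(σ) ≥ (5/4)^L whenever n_ur(σ) = 0 and σ ∉ {1, −1}. -/
open Real Filter MeasureTheory

noncomputable section

/-- A site of the 2d discrete torus `(ℤ/Lℤ)²`. -/
abbrev Site (L : ℕ) := ZMod L × ZMod L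

/-- A spin configuration on the torus, `true = +1`, `false = -1`. -/
abbrev Cfg (L : ℕ) := Site L → Bool

/-- The real spin value of a Boolean spin. -/
def spin (b : Bool) : ℝ := if b then 1 else -1

/-- The up neighbor. -/
def upN {L : ℕ} (x : Site L) : Site L := (x.1, x.2 + 1)
/-- The right neighbor. -/
def rtN {L : ℕ} (x : Site L) : Site L := (x.1 + 1, x.2)
/-- The down neighbor. -/
def dnN {L : ℕ} (x : Site L) : Site L := (x.1, x.2 - 1)
/-- The left neighbor. -/
def lfN {L : ℕ} (x : Site L) : Site L := (x.1 - 1, x.2)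

/-- The pair Hamiltonian `H(σ,τ) = −∑_x [J σ_x (τ_{x^u} + τ_{x^r}) + q σ_x τ_x]`. -/
def pairH (L : ℕ) [NeZero L] (J q : ℝ) (σ τ : Cfg L) : ℝ :=
  - ∑ x : Site L, (J * spin (σ x) * (spin (τ (upN x)) + spin (τ (rtN x)))
      + q * spin (σ x) * spin (τ x))

/-- The normalization `Z_σ = ∑_τ e^{−H(σ,τ)}`. -/
def Zconf (L : ℕ) [NeZero L] (J q : ℝ) (σ : Cfg L) : ℝ :=
  ∑ τ : Cfg L, Real.exp (-(pairH L J q σ τ))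

/-- The PCA transition probabilities `P(σ,τ) = e^{−H(σ,τ)}/Z_σ`. -/
def Ptrans (L : ℕ) [NeZero L] (J q : ℝ) (σ τ : Cfg L) : ℝ :=
  Real.exp (-(pairH L J q σ τ)) / Zconf L J q σ

/-- `Z_PCA = ∑_σ Z_σ`. -/
def Zpca (L : ℕ) [NeZero L] (J q : ℝ) : ℝ := ∑ σ : Cfg L, Zconf L J q σ

/-- The PCA stationary measure `π_PCA(σ) = Z_σ / Z_PCA`. -/
def piPCA (L : ℕ) [NeZero L] (J q : ℝ) (σ : Cfg L) : ℝ := Zconf L J q σ / Zpca L J q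

/-- The Ising Hamiltonian `H_G(σ) = −J ∑_{(x,y)} σ_x σ_y`, the sum over (unordered)
nearest-neighbor pairs of the torus, each pair being counted once via its up/right bond. -/
def isingH (L : ℕ) [NeZero L] (J : ℝ) (σ : Cfg L) : ℝ :=
  - J * ∑ x : Site L, spin (σ x) * (spin (σ (upN x)) + spin (σ (rtN x)))

/-- The Ising partition function. -/
def Zg (L : ℕ) [NeZero L] (J : ℝ) : ℝ := ∑ σ : Cfg L, Real.exp (-(isingH L J σ))

/-- The Ising Gibbs measure `π_G(σ) = e^{−H_G(σ)}/Z_G`. -/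
def piG (L : ℕ) [NeZero L] (J : ℝ) (σ : Cfg L) : ℝ := Real.exp (-(isingH L J σ)) / Zg L J

/-- Total variation distance between two measures on configuration space. -/
def tv (L : ℕ) [NeZero L] (μ ν : Cfg L → ℝ) : ℝ := (1/2) * ∑ σ : Cfg L, |μ σ - ν σ|

/-- The all-plus configuration. -/
def plusCfg (L : ℕ) : Cfg L := fun _ => true
/-- The all-minus configuration. -/
def minusCfg (L : ℕ) : Cfg L := fun _ => false

/-- The number of down-left corners of the Peierls contour of `σ`: sites `x` such that
both bonds `{x,x^d}` and `{x,x^l}` belong to `γ(σ)`. -/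
def nDL (L : ℕ) [NeZero L] (σ : Cfg L) : ℕ :=
  (Finset.univ.filter fun x : Site L => σ x ≠ σ (dnN x) ∧ σ x ≠ σ (lfN x)).card

/-- The number of up-right corners of the Peierls contour of `σ`: sites `x` such that
both bonds `{x,x^u}` and `{x,x^r}` belong to `γ(σ)`. -/
def nUR (L : ℕ) [NeZero L] (σ : Cfg L) : ℕ :=
  (Finset.univ.filter fun x : Site L => σ x ≠ σ (upN x) ∧ σ x ≠ σ (rtN x)).card

/-- The total length `l(σ) = |γ(σ)|` of the Peierls contour of `σ`: the number of
nearest-neighbor bonds whose endpoints carry opposite spins (each bond counted once,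
via its lower/left endpoint). -/
def contourLen (L : ℕ) [NeZero L] (σ : Cfg L) : ℕ :=
  (Finset.univ.filter fun x : Site L => σ x ≠ σ (upN x)).card +
  (Finset.univ.filter fun x : Site L => σ x ≠ σ (rtN x)).card

/-- `δ = e^{−2q}`. -/
def deltaQ (q : ℝ) : ℝ := Real.exp (-(2 * q))

/-- The normalized density
`g(σ) = [(1+δe^{4J})/(1+δe^{−4J})]^{n_ur(σ)} · [(1+δ)/(1+δe^{−4J})]^{l(σ)−2n_ur(σ)}`
(the second, possibly negative, exponent is taken as a real exponent). -/
def gDens (L : ℕ) [NeZero L] (J q : ℝ) (σ : Cfg L) : ℝ :=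
  ((1 + deltaQ q * Real.exp (4 * J)) / (1 + deltaQ q * Real.exp (-(4 * J)))) ^ (nUR L σ)
    * ((1 + deltaQ q) / (1 + deltaQ q * Real.exp (-(4 * J))))
        ^ ((contourLen L σ : ℝ) - 2 * (nUR L σ : ℝ))


open Finset
set_option linter.unusedSectionVars false

namespace S10

set_option linter.unusedSectionVars false

section Walk
variable {C : Type*} [Fintype C] [Nonempty C]

lemma sum_funUnique (F : (Fin 1 → C) → ℝ) : (∑ w : Fin 1 → C, F w) = ∑ b : C, F (fun _ => b) := by
  rw [← (Equiv.funUnique (Fin 1) C).symm.sum_comp]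
  rfl

lemma sum_consEquiv {m : ℕ} (F : (Fin (m + 1) → C) → ℝ) :
    (∑ w : Fin (m + 1) → C, F w) = ∑ b : C, ∑ w' : Fin m → C, F (Fin.cons b w') := by
  rw [← (Fin.consEquiv (fun _ : Fin (m + 1) => C)).sum_comp, Fintype.sum_prod_type]
  rfl

lemma cons_prod {m : ℕ} (W : C → C → ℝ) (b : C) (w' : Fin (m + 1) → C) :
    (∏ i : Fin (m + 1), W ((Fin.cons b w' : Fin (m + 2) → C) i.castSucc)
        ((Fin.cons b w' : Fin (m + 2) → C) i.succ))
      = W b (w' 0) * ∏ i : Fin m, W (w' i.castSucc) (w' i.succ) := by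
  set w : Fin (m + 2) → C := Fin.cons b w' with hw
  rw [Fin.prod_univ_succ]
  have h1 : ∀ i : Fin m, W (w i.succ.castSucc) (w i.succ.succ) = W (w' i.castSucc) (w' i.succ) := by
    intro i
    rw [← Fin.succ_castSucc]
    simp [hw]
  have h2 : W (w ((0 : Fin (m + 1)).castSucc)) (w (0 : Fin (m + 1)).succ) = W b (w' 0) := by
    have : w ((0 : Fin (m + 1)).castSucc) = b := by simp [hw]
    have h3 : w (0 : Fin (m + 1)).succ = w' 0 := by simp [hw]
    rw [this, h3]
  rw [h2]
  exact congrArg (fun z => W b (w' 0) * z) (Finset.prod_congr rfl fun i _ => h1 i)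

lemma walkA (W : C → C → ℝ) (r : ℝ) (hW : ∀ a b, 0 ≤ W a b)
    (hrow : ∀ a, (∑ b, W a b) ≤ r) :
    ∀ (m : ℕ) (a : C),
      (∑ w : Fin (m + 1) → C, W a (w 0) * ∏ i : Fin m, W (w i.castSucc) (w i.succ))
        ≤ r ^ (m + 1) := by
  have hr : 0 ≤ r :=
    le_trans (Finset.sum_nonneg fun b _ => hW (Classical.arbitrary C) b) (hrow _)
  intro m
  induction m with
  | zero =>
    intro a
    rw [sum_funUnique (fun w => W a (w 0) * ∏ i : Fin 0, W (w i.castSucc) (w i.succ))]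
    simpa using hrow a
  | succ m ih =>
    intro a
    rw [sum_consEquiv (fun w => W a (w 0) * ∏ i : Fin (m + 1), W (w i.castSucc) (w i.succ))]
    calc (∑ b : C, ∑ w' : Fin (m + 1) → C, W a ((Fin.cons b w' : Fin (m + 2) → C) 0)
            * ∏ i : Fin (m + 1), W ((Fin.cons b w' : Fin (m + 2) → C) i.castSucc)
                ((Fin.cons b w' : Fin (m + 2) → C) i.succ))
        = ∑ b : C, W a b * ∑ w' : Fin (m + 1) → C,
            (W b (w' 0) * ∏ i : Fin m, W (w' i.castSucc) (w' i.succ)) := by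
          refine Finset.sum_congr rfl fun b _ => ?_
          rw [Finset.mul_sum]
          refine Finset.sum_congr rfl fun w' _ => ?_
          rw [cons_prod W b w', Fin.cons_zero]
      _ ≤ ∑ b : C, W a b * r ^ (m + 1) := by
          refine Finset.sum_le_sum fun b _ => ?_
          exact mul_le_mul_of_nonneg_left (ih b) (hW a b)
      _ = (∑ b : C, W a b) * r ^ (m + 1) := by rw [← Finset.sum_mul]
      _ ≤ r * r ^ (m + 1) := mul_le_mul_of_nonneg_right (hrow a) (pow_nonneg hr _)
      _ = r ^ (m + 1 + 1) := by ring

lemma walkB (W : C → C → ℝ) (colb : C → ℝ) (r : ℝ) (hW : ∀ a b, 0 ≤ W a b)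
    (hcol : ∀ b, 0 ≤ colb b) (hrow : ∀ a, (∑ b, W a b) ≤ r) (m : ℕ) :
    (∑ w : Fin (m + 1) → C, colb (w 0) * ∏ i : Fin m, W (w i.castSucc) (w i.succ))
      ≤ (∑ b : C, colb b) * r ^ m := by
  have hr : 0 ≤ r :=
    le_trans (Finset.sum_nonneg fun b _ => hW (Classical.arbitrary C) b) (hrow _)
  cases m with
  | zero =>
    rw [sum_funUnique (fun w => colb (w 0) * ∏ i : Fin 0, W (w i.castSucc) (w i.succ))]
    simp
  | succ m =>
    rw [sum_consEquiv (fun w => colb (w 0) * ∏ i : Fin (m + 1), W (w i.castSucc) (w i.succ))]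
    calc (∑ b : C, ∑ w' : Fin (m + 1) → C, colb ((Fin.cons b w' : Fin (m + 2) → C) 0)
            * ∏ i : Fin (m + 1), W ((Fin.cons b w' : Fin (m + 2) → C) i.castSucc)
                ((Fin.cons b w' : Fin (m + 2) → C) i.succ))
        = ∑ b : C, colb b * ∑ w' : Fin (m + 1) → C,
            (W b (w' 0) * ∏ i : Fin m, W (w' i.castSucc) (w' i.succ)) := by
          refine Finset.sum_congr rfl fun b _ => ?_
          rw [Finset.mul_sum]
          refine Finset.sum_congr rfl fun w' _ => ?_
          rw [cons_prod W b w', Fin.cons_zero]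
      _ ≤ ∑ b : C, colb b * r ^ (m + 1) := by
          refine Finset.sum_le_sum fun b _ => ?_
          exact mul_le_mul_of_nonneg_left (walkA W r hW hrow m b) (hcol b)
      _ = (∑ b : C, colb b) * r ^ (m + 1) := by rw [← Finset.sum_mul]

end Walk
end S10

namespace S10
section Cyclic
variable {C : Type*} [Fintype C] [Nonempty C]

lemma cyclic_fin (W : C → C → ℝ) (colb : C → ℝ) (r : ℝ) (hW : ∀ a b, 0 ≤ W a b)
    (hcolW : ∀ a b, W a b ≤ colb b) (hrow : ∀ a, (∑ b, W a b) ≤ r) (m : ℕ) :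
    (∑ w : Fin (m + 1) → C, ∏ i : Fin (m + 1), W (w i) (w (i + 1)))
      ≤ (∑ b : C, colb b) * r ^ m := by
  have hcol0 : ∀ b, 0 ≤ colb b := fun b => le_trans (hW b b) (hcolW b b)
  have step : ∀ w : Fin (m + 1) → C,
      (∏ i : Fin (m + 1), W (w i) (w (i + 1)))
        ≤ colb (w 0) * ∏ j : Fin m, W (w j.castSucc) (w j.succ) := by
    intro w
    rw [Fin.prod_univ_castSucc]
    have h1 : ∀ j : Fin m, W (w j.castSucc) (w (j.castSucc + 1)) = W (w j.castSucc) (w j.succ) := by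
      intro j
      rw [Fin.coeSucc_eq_succ]
    have h2 : W (w (Fin.last m)) (w (Fin.last m + 1)) ≤ colb (w 0) := by
      rw [Fin.last_add_one]
      exact hcolW _ _
    calc (∏ j : Fin m, W (w j.castSucc) (w (j.castSucc + 1))) * W (w (Fin.last m)) (w (Fin.last m + 1))
        ≤ (∏ j : Fin m, W (w j.castSucc) (w (j.castSucc + 1))) * colb (w 0) :=
          mul_le_mul_of_nonneg_left h2 (Finset.prod_nonneg fun j _ => hW _ _)
      _ = colb (w 0) * ∏ j : Fin m, W (w j.castSucc) (w j.succ) := by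
          rw [mul_comm]
          exact congrArg (fun z => colb (w 0) * z) (Finset.prod_congr rfl fun j _ => h1 j)
  calc (∑ w : Fin (m + 1) → C, ∏ i : Fin (m + 1), W (w i) (w (i + 1)))
      ≤ ∑ w : Fin (m + 1) → C, colb (w 0) * ∏ j : Fin m, W (w j.castSucc) (w j.succ) :=
        Finset.sum_le_sum fun w _ => step w
    _ ≤ (∑ b : C, colb b) * r ^ m := walkB W colb r hW hcol0 hrow m

lemma cyclic_zmod (L : ℕ) [NeZero L] (W : C → C → ℝ) (colb : C → ℝ) (r : ℝ)
    (hW : ∀ a b, 0 ≤ W a b) (hcolW : ∀ a b, W a b ≤ colb b) (hrow : ∀ a, (∑ b, W a b) ≤ r) :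
    (∑ s : ZMod L → C, ∏ d : ZMod L, W (s d) (s (d + 1)))
      ≤ (∑ b : C, colb b) * r ^ (L - 1) := by
  have hL0 : L ≠ 0 := NeZero.ne L
  obtain ⟨m, rfl⟩ : ∃ m, L = m + 1 := ⟨L - 1, by omega⟩
  let e : Fin (m + 1) ≃ ZMod (m + 1) :=
    ⟨fun i => (i.val : ZMod (m + 1)), fun x => ⟨x.val, x.val_lt⟩,
      fun i => Fin.ext (ZMod.val_cast_of_lt i.isLt),
      fun x => ZMod.natCast_zmod_val x⟩
  have key : ∀ i : Fin (m + 1), e (i + 1) = e i + 1 := by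
    intro i
    show (((i + 1 : Fin (m + 1)).val : ℕ) : ZMod (m + 1)) = ((i.val : ℕ) : ZMod (m + 1)) + 1
    rw [Fin.val_add, ZMod.natCast_mod, Nat.cast_add, Fin.val_one', ZMod.natCast_mod, Nat.cast_one]
  have reindex : (∑ s : ZMod (m + 1) → C, ∏ d : ZMod (m + 1), W (s d) (s (d + 1)))
      = ∑ w : Fin (m + 1) → C, ∏ i : Fin (m + 1), W (w i) (w (i + 1)) := by
    rw [← (Equiv.arrowCongr e (Equiv.refl C)).sum_comp
      (fun s : ZMod (m + 1) → C => ∏ d : ZMod (m + 1), W (s d) (s (d + 1)))]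
    refine Finset.sum_congr rfl fun w _ => ?_
    rw [← Fintype.prod_equiv e
      (fun i : Fin (m + 1) => W (w i) (w (i + 1)))
      (fun d : ZMod (m + 1) => W ((Equiv.arrowCongr e (Equiv.refl C) w) d)
        ((Equiv.arrowCongr e (Equiv.refl C) w) (d + 1)))]
    intro i
    have h1 : (Equiv.arrowCongr e (Equiv.refl C) w) (e i) = w i := by
      simp
    have h2 : (Equiv.arrowCongr e (Equiv.refl C) w) (e i + 1) = w (i + 1) := by
      rw [← key i]
      simp
    rw [h1, h2]
  rw [reindex]
  simpa using cyclic_fin W colb r hW hcolW hrow m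

end Cyclic
end S10




namespace S10

section Layers
variable {L : ℕ} [NeZero L]

/-- number of changes around a cyclic layer -/
def nCh (t : ZMod L → Bool) : ℕ := (univ.filter fun i => t i ≠ t (i + 1)).card

/-- number of double-disagreements between a layer and the next -/
def nD2 (t t' : ZMod L → Bool) : ℕ :=
  (univ.filter fun i => t i ≠ t' i ∧ t i ≠ t' (i + 1)).card

def IsC (t : ZMod L → Bool) : Prop := (t = fun _ => true) ∨ (t = fun _ => false)

instance : DecidablePred (IsC (L := L)) := fun t => by unfold IsC; infer_instance

lemma even_nCh (t : ZMod L → Bool) : Even (nCh t) := by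
  classical
  set e : Bool → ℝ := fun b => if b then 1 else -1 with he
  have hterm : ∀ i : ZMod L, (if t i = t (i + 1) then (1 : ℝ) else -1) = e (t i) * e (t (i + 1)) := by
    intro i
    cases hb : t i <;> cases hb' : t (i + 1) <;> simp [he]
  have hP2 : (∏ i : ZMod L, (if t i = t (i + 1) then (1 : ℝ) else -1))
      = (∏ i : ZMod L, e (t i)) * ∏ i : ZMod L, e (t (i + 1)) := by
    rw [← Finset.prod_mul_distrib]
    exact Finset.prod_congr rfl fun i _ => hterm i
  have hre : (∏ i : ZMod L, e (t (i + 1))) = ∏ i : ZMod L, e (t i) :=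
    Fintype.prod_equiv (Equiv.addRight (1 : ZMod L)) _ _ (fun i => rfl)
  have hnonneg : 0 ≤ ∏ i : ZMod L, (if t i = t (i + 1) then (1 : ℝ) else -1) := by
    rw [hP2, hre]
    exact mul_self_nonneg _
  have hP : (∏ i : ZMod L, (if t i = t (i + 1) then (1 : ℝ) else -1)) = (-1 : ℝ) ^ nCh t := by
    rw [Finset.prod_ite (fun _ => (1 : ℝ)) (fun _ => (-1 : ℝ))]
    rw [Finset.prod_const, Finset.prod_const, one_pow, one_mul]
    rfl
  by_contra hodd
  rw [Nat.not_even_iff_odd] at hodd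
  rw [hP, hodd.neg_one_pow] at hnonneg
  linarith

lemma layer_eq_of_changes {t t' : ZMod L → Bool} (h0 : t 0 = t' 0)
    (hc : ∀ i, (t i ≠ t (i + 1)) ↔ (t' i ≠ t' (i + 1))) : t = t' := by
  have key : ∀ n : ℕ, t (n : ZMod L) = t' (n : ZMod L) := by
    intro n
    induction n with
    | zero => simpa using h0
    | succ n ih =>
      have hcast : ((n + 1 : ℕ) : ZMod L) = (n : ZMod L) + 1 := by push_cast; ring
      rw [hcast]
      have hc' := hc (n : ZMod L)
      cases h1 : t ((n : ZMod L) + 1) <;> cases h2 : t' ((n : ZMod L) + 1) <;> simp_all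
  funext i
  have : ((i.val : ℕ) : ZMod L) = i := ZMod.natCast_zmod_val i
  rw [← this]
  exact key i.val

lemma isC_of_nCh_zero {t : ZMod L → Bool} (h : nCh t = 0) : IsC t := by
  have hconst : t = fun _ => t 0 := by
    refine layer_eq_of_changes rfl fun i => ?_
    have : ∀ j : ZMod L, t j = t (j + 1) := by
      intro j
      by_contra hj
      have : j ∈ univ.filter fun i => t i ≠ t (i + 1) := by simp [hj]
      rw [Finset.card_eq_zero.mp h] at this
      simp at this
    simp [this i]
  cases hb : t 0
  · right; rw [hconst, hb]
  · left; rw [hconst, hb]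

lemma two_le_nCh {t : ZMod L → Bool} (h : ¬ IsC t) : 2 ≤ nCh t := by
  have h0 : nCh t ≠ 0 := fun hz => h (isC_of_nCh_zero hz)
  obtain ⟨m, hm⟩ := even_nCh t
  omega

/-- injectivity of (start value, change set) -/
lemma changes_inj {t t' : ZMod L → Bool}
    (h0 : t 0 = t' 0)
    (hA : (univ.filter fun i => t i ≠ t (i + 1)) = (univ.filter fun i => t' i ≠ t' (i + 1))) :
    t = t' := by
  refine layer_eq_of_changes h0 fun i => ?_
  constructor
  · intro hi
    have : i ∈ univ.filter fun j => t j ≠ t (j + 1) := by simp [hi]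
    rw [hA] at this
    simpa using this
  · intro hi
    have : i ∈ univ.filter fun j => t' j ≠ t' (j + 1) := by simp [hi]
    rw [← hA] at this
    simpa using this

end Layers
end S10

namespace S10
section Eps
variable {L : ℕ} [NeZero L]

lemma geom_tail_le {x : ℝ} (hx0 : 0 ≤ x) (hx : x ≤ 1/2) :
    (∑ j ∈ Finset.Icc 2 L, x ^ j) ≤ 2 * x ^ 2 := by
  have h1 : ∀ j ∈ Finset.Icc 2 L, x ^ j ≤ x ^ 2 * (1/2 : ℝ) ^ (j - 2) := by
    intro j hj
    have hj2 : 2 ≤ j := (Finset.mem_Icc.mp hj).1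
    have : x ^ j = x ^ 2 * x ^ (j - 2) := by
      rw [← pow_add]
      congr 1
      omega
    rw [this]
    exact mul_le_mul_of_nonneg_left (pow_le_pow_left₀ hx0 hx _) (pow_nonneg hx0 2)
  calc (∑ j ∈ Finset.Icc 2 L, x ^ j) ≤ ∑ j ∈ Finset.Icc 2 L, x ^ 2 * (1/2 : ℝ) ^ (j - 2) :=
        Finset.sum_le_sum h1
    _ = x ^ 2 * ∑ j ∈ Finset.Icc 2 L, (1/2 : ℝ) ^ (j - 2) := by rw [Finset.mul_sum]
    _ ≤ x ^ 2 * 2 := by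
        refine mul_le_mul_of_nonneg_left ?_ (pow_nonneg hx0 2)
        have hbij : (∑ j ∈ Finset.Icc 2 L, (1/2 : ℝ) ^ (j - 2))
            = ∑ i ∈ Finset.range (L - 1), (1/2 : ℝ) ^ i := by
          refine Finset.sum_nbij' (fun j => j - 2) (fun i => i + 2) ?_ ?_ ?_ ?_ ?_
          · intro j hj
            rw [Finset.mem_Icc] at hj
            rw [Finset.mem_range]
            omega
          · intro i hi
            rw [Finset.mem_range] at hi
            rw [Finset.mem_Icc]
            omega
          · intro j hj
            rw [Finset.mem_Icc] at hj
            omega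
          · intro i _
            omega
          · intro j _
            rfl
        rw [hbij]
        exact sum_geometric_two_le _
    _ = 2 * x ^ 2 := by ring

lemma eps_le {u : ℝ} (hu : 0 ≤ u) (hx : (L : ℝ) * u ≤ 1/2) :
    (∑ t ∈ Finset.univ.filter (fun t : ZMod L → Bool => ¬ IsC t), u ^ nCh t)
      ≤ 4 * ((L : ℝ) * u) ^ 2 := by
  classical
  set x := (L : ℝ) * u with hxdef
  have hL1 : (1 : ℝ) ≤ (L : ℝ) := by
    have := NeZero.pos L
    exact_mod_cast this
  have hx0 : 0 ≤ x := mul_nonneg (by positivity) hu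
  set φ : (ZMod L → Bool) → Bool × Finset (ZMod L) :=
    fun t => (t 0, Finset.univ.filter fun i => t i ≠ t (i + 1)) with hφ
  set S := Finset.univ.filter (fun t : ZMod L → Bool => ¬ IsC t) with hS
  have hinj : ∀ t ∈ S, ∀ t' ∈ S, φ t = φ t' → t = t' := by
    intro t _ t' _ h
    rw [Prod.mk.injEq] at h
    exact changes_inj h.1 h.2
  have himg : (∑ p ∈ S.image φ, u ^ p.2.card) = ∑ t ∈ S, u ^ nCh t :=
    Finset.sum_image hinj
  set Tgt := (Finset.univ : Finset Bool) ×ˢ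
    ((Finset.univ : Finset (ZMod L)).powerset.filter fun A => 2 ≤ A.card) with hT
  have hsub : S.image φ ⊆ Tgt := by
    intro p hp
    rw [Finset.mem_image] at hp
    obtain ⟨t, ht, rfl⟩ := hp
    rw [Finset.mem_product]
    constructor
    · exact Finset.mem_univ _
    · rw [Finset.mem_filter, Finset.mem_powerset]
      refine ⟨Finset.filter_subset _ _, ?_⟩
      have : ¬ IsC t := (Finset.mem_filter.mp ht).2
      exact two_le_nCh this
  have hstep1 : (∑ t ∈ S, u ^ nCh t) ≤ ∑ p ∈ Tgt, u ^ p.2.card := by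
    rw [← himg]
    exact Finset.sum_le_sum_of_subset_of_nonneg hsub (fun p _ _ => pow_nonneg hu _)
  have hinner : (∑ A ∈ (Finset.univ : Finset (ZMod L)).powerset.filter
      (fun A => 2 ≤ A.card), u ^ A.card) ≤ 2 * x ^ 2 := by
    set fset := (Finset.univ : Finset (ZMod L)).powerset.filter fun A => 2 ≤ A.card with hf
    have hmaps : ∀ A ∈ fset, A.card ∈ Finset.Icc 2 L := by
      intro A hA
      rw [Finset.mem_filter, Finset.mem_powerset] at hA
      rw [Finset.mem_Icc]
      refine ⟨hA.2, ?_⟩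
      calc A.card ≤ (Finset.univ : Finset (ZMod L)).card := Finset.card_le_card hA.1
        _ = L := by rw [Finset.card_univ, ZMod.card]
    have hfib : (∑ j ∈ Finset.Icc 2 L, ∑ A ∈ fset.filter (fun A => A.card = j), u ^ A.card)
        = ∑ A ∈ fset, u ^ A.card := Finset.sum_fiberwise_of_maps_to hmaps _
    rw [← hfib]
    have hj : ∀ j ∈ Finset.Icc 2 L,
        (∑ A ∈ fset.filter (fun A => A.card = j), u ^ A.card) ≤ x ^ j := by
      intro j _
      have hsub2 : fset.filter (fun A => A.card = j)
          ⊆ (Finset.univ : Finset (ZMod L)).powersetCard j := by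
        intro A hA
        rw [Finset.mem_filter, Finset.mem_filter, Finset.mem_powerset] at hA
        rw [Finset.mem_powersetCard]
        exact ⟨hA.1.1, hA.2⟩
      calc (∑ A ∈ fset.filter (fun A => A.card = j), u ^ A.card)
          = ∑ A ∈ fset.filter (fun A => A.card = j), u ^ j := by
            refine Finset.sum_congr rfl fun A hA => ?_
            rw [(Finset.mem_filter.mp hA).2]
        _ = ((fset.filter (fun A => A.card = j)).card : ℝ) * u ^ j := by
            rw [Finset.sum_const, nsmul_eq_mul]
        _ ≤ ((L.choose j : ℕ) : ℝ) * u ^ j := by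
            refine mul_le_mul_of_nonneg_right ?_ (pow_nonneg hu _)
            have := Finset.card_le_card hsub2
            rw [Finset.card_powersetCard, Finset.card_univ, ZMod.card] at this
            exact_mod_cast this
        _ ≤ ((L : ℝ) ^ j) * u ^ j := by
            refine mul_le_mul_of_nonneg_right ?_ (pow_nonneg hu _)
            have := Nat.choose_le_pow L j
            calc ((L.choose j : ℕ) : ℝ) ≤ ((L ^ j : ℕ) : ℝ) := by exact_mod_cast this
              _ = (L : ℝ) ^ j := by push_cast; ring
        _ = x ^ j := by rw [hxdef, mul_pow]
    calc (∑ j ∈ Finset.Icc 2 L, ∑ A ∈ fset.filter (fun A => A.card = j), u ^ A.card)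
        ≤ ∑ j ∈ Finset.Icc 2 L, x ^ j := Finset.sum_le_sum hj
      _ ≤ 2 * x ^ 2 := geom_tail_le hx0 hx
  calc (∑ t ∈ S, u ^ nCh t) ≤ ∑ p ∈ Tgt, u ^ p.2.card := hstep1
    _ = ∑ b : Bool, ∑ A ∈ (Finset.univ : Finset (ZMod L)).powerset.filter
          (fun A => 2 ≤ A.card), u ^ A.card := by rw [hT, Finset.sum_product]
    _ = 2 * ∑ A ∈ (Finset.univ : Finset (ZMod L)).powerset.filter
          (fun A => 2 ≤ A.card), u ^ A.card := by
        rw [Fintype.sum_bool]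
        ring
    _ ≤ 2 * (2 * x ^ 2) := by
        refine mul_le_mul_of_nonneg_left hinner (by norm_num)
    _ = 4 * x ^ 2 := by ring

end Eps
end S10

namespace S10
section Transfer
variable {L : ℕ} [NeZero L]

/-- transfer weight between consecutive diagonal layers -/
def Tw (v u : ℝ) (t t' : ZMod L → Bool) : ℝ := v ^ nD2 t t' * u ^ nCh t'

def epsSum (L : ℕ) [NeZero L] (u : ℝ) : ℝ :=
  ∑ t ∈ Finset.univ.filter (fun t : ZMod L → Bool => ¬ IsC t), u ^ nCh t

variable {v u : ℝ}

lemma Tw_nonneg (hv0 : 0 ≤ v) (hu0 : 0 ≤ u) (t t' : ZMod L → Bool) : 0 ≤ Tw v u t t' :=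
  mul_nonneg (pow_nonneg hv0 _) (pow_nonneg hu0 _)

lemma Tw_le_one (hv0 : 0 ≤ v) (hv1 : v ≤ 1) (hu0 : 0 ≤ u) (hu1 : u ≤ 1)
    (t t' : ZMod L → Bool) : Tw v u t t' ≤ 1 := by
  have := mul_le_mul (pow_le_one₀ hv0 hv1 (n := nD2 t t')) (pow_le_one₀ hu0 hu1 (n := nCh t'))
    (pow_nonneg hu0 _) zero_le_one
  simpa [Tw] using this

lemma Tw_le_u_pow (hv0 : 0 ≤ v) (hv1 : v ≤ 1) (hu0 : 0 ≤ u) (t t' : ZMod L → Bool) :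
    Tw v u t t' ≤ u ^ nCh t' := by
  have h := mul_le_mul_of_nonneg_right (pow_le_one₀ hv0 hv1 (n := nD2 t t')) (pow_nonneg hu0 (nCh t'))
  simpa [Tw] using h

lemma nCh_const (b : Bool) : nCh (fun _ : ZMod L => b) = 0 := by
  rw [nCh]
  rw [Finset.card_eq_zero]
  ext i
  simp

lemma nD2_const_same (b : Bool) : nD2 (fun _ : ZMod L => b) (fun _ => b) = 0 := by
  rw [nD2, Finset.card_eq_zero]
  ext i
  simp

lemma nD2_const_diff : nD2 (fun _ : ZMod L => true) (fun _ => false) = L := by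
  rw [nD2]
  have : (Finset.univ.filter fun i : ZMod L =>
      (fun _ : ZMod L => true) i ≠ (fun _ : ZMod L => false) i
        ∧ (fun _ : ZMod L => true) i ≠ (fun _ : ZMod L => false) (i + 1)) = Finset.univ := by
    ext i; simp
  rw [this, Finset.card_univ, ZMod.card]

lemma nD2_const_diff' : nD2 (fun _ : ZMod L => false) (fun _ => true) = L := by
  rw [nD2]
  have : (Finset.univ.filter fun i : ZMod L =>
      (fun _ : ZMod L => false) i ≠ (fun _ : ZMod L => true) i
        ∧ (fun _ : ZMod L => false) i ≠ (fun _ : ZMod L => true) (i + 1)) = Finset.univ := by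
    ext i; simp
  rw [this, Finset.card_univ, ZMod.card]

lemma filter_isC_eq :
    (Finset.univ.filter (IsC (L := L)))
      = ({(fun _ => true), (fun _ => false)} : Finset (ZMod L → Bool)) := by
  ext t
  simp [IsC, Finset.mem_insert]

lemma cT_ne_cF : (fun _ : ZMod L => true) ≠ (fun _ => false) := by
  intro h
  have := congrFun h 0
  simp at this

lemma epsSum_pos (hL2 : 2 ≤ L) (hu0 : 0 < u) : 0 < epsSum L u := by
  classical
  haveI : Fact (1 < L) := ⟨by omega⟩
  have h1 : (1 : ZMod L) ≠ 0 := by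
    intro h
    have hv := congrArg ZMod.val h
    rw [ZMod.val_one L, ZMod.val_zero] at hv
    exact one_ne_zero hv
  set t₀ : ZMod L → Bool := fun i => decide (i = 0) with ht₀
  have hnc : ¬ IsC t₀ := by
    intro h
    rcases h with h | h
    · have := congrFun h 1
      simp [ht₀, h1] at this
    · have := congrFun h 0
      simp [ht₀] at this
  have hmem : t₀ ∈ Finset.univ.filter (fun t : ZMod L → Bool => ¬ IsC t) := by
    simp [hnc]
  refine lt_of_lt_of_le ?_ (Finset.single_le_sum (f := fun t => u ^ nCh t)
    (fun t _ => pow_nonneg hu0.le _) hmem)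
  positivity

lemma epsSum_nonneg (hu0 : 0 ≤ u) : 0 ≤ epsSum L u :=
  Finset.sum_nonneg fun t _ => pow_nonneg hu0 _

lemma epsSum_le (hu0 : 0 ≤ u) (hx : (L : ℝ) * u ≤ 1/2) :
    epsSum L u ≤ 4 * ((L : ℝ) * u) ^ 2 := eps_le hu0 hx

/-- The main transfer bound. -/
lemma Slayers_le (hL2 : 2 ≤ L) (hv0 : 0 ≤ v) (hv1 : v ≤ 1) (hu0 : 0 < u) (hu1 : u ≤ 1)
    (hx : (L : ℝ) * u ≤ 1/4) :
    (∑ f : ZMod L → ZMod L → Bool, ∏ d : ZMod L, Tw v u (f d) (f (d + 1)))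
      ≤ (5/2) * (1 + v ^ L + Real.sqrt (epsSum L u)) ^ (L - 1) := by
  classical
  set ε := epsSum L u with hε
  set s := Real.sqrt ε with hsdef
  have hLu2 : (L : ℝ) * u ≤ 1/2 := by linarith
  have hε0 : 0 < ε := epsSum_pos hL2 hu0
  have hs0 : 0 < s := Real.sqrt_pos.mpr hε0
  have hss : s * s = ε := Real.mul_self_sqrt hε0.le
  have hs12 : s ≤ 1/2 := by
    have h1 : ε ≤ 1/4 := by
      have := epsSum_le hu0.le hLu2
      have h2 : 4 * ((L : ℝ) * u) ^ 2 ≤ 1/4 := by nlinarith [mul_nonneg (Nat.cast_nonneg L) hu0.le]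
      linarith
    have : s ≤ Real.sqrt (1/4) := Real.sqrt_le_sqrt h1
    have h4 : Real.sqrt (1/4) = 1/2 := by
      rw [show (1/4 : ℝ) = (1/2) ^ 2 by norm_num, Real.sqrt_sq (by norm_num)]
    linarith [this, h4.le]
  set τ : (ZMod L → Bool) → ℝ := fun t => if IsC t then 1 else s with hτ
  have hτpos : ∀ t, 0 < τ t := by
    intro t
    rw [hτ]
    dsimp only
    split <;> [norm_num; exact hs0]
  have hτle1 : ∀ t, τ t ≤ 1 := by
    intro t
    rw [hτ]
    dsimp only
    split
    · exact le_refl 1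
    · linarith
  set W : (ZMod L → Bool) → (ZMod L → Bool) → ℝ :=
    fun t t' => Tw v u t t' * (τ t / τ t') with hW
  have hWnn : ∀ t t', 0 ≤ W t t' := by
    intro t t'
    exact mul_nonneg (Tw_nonneg hv0 hu0.le _ _) (le_of_lt (div_pos (hτpos t) (hτpos t')))
  set r := 1 + v ^ L + s with hr
  set colb : (ZMod L → Bool) → ℝ := fun t' => if IsC t' then 1 else u ^ nCh t' / s with hcolb
  -- the product of W equals the product of Tw
  have hprod : ∀ f : ZMod L → ZMod L → Bool,
      (∏ d : ZMod L, W (f d) (f (d + 1))) = ∏ d : ZMod L, Tw v u (f d) (f (d + 1)) := by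
    intro f
    rw [hW]
    dsimp only
    rw [Finset.prod_mul_distrib]
    have : (∏ d : ZMod L, (τ (f d) / τ (f (d + 1)))) = 1 := by
      rw [Finset.prod_div_distrib]
      have hre : (∏ d : ZMod L, τ (f (d + 1))) = ∏ d : ZMod L, τ (f d) :=
        Fintype.prod_equiv (Equiv.addRight (1 : ZMod L)) _ _ (fun d => rfl)
      rw [hre]
      exact div_self (ne_of_gt (Finset.prod_pos fun d _ => hτpos _))
    rw [this, mul_one]
  -- NC partial sums
  have hNCsum : ∀ t, (∑ t' ∈ Finset.univ.filter (fun t' : ZMod L → Bool => ¬ IsC t'), W t t')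
      ≤ τ t * s := by
    intro t
    have : ∀ t' ∈ Finset.univ.filter (fun t' : ZMod L → Bool => ¬ IsC t'),
        W t t' ≤ u ^ nCh t' * (τ t / s) := by
      intro t' ht'
      have hnc : ¬ IsC t' := (Finset.mem_filter.mp ht').2
      rw [hW]
      dsimp only
      rw [hτ]
      dsimp only
      rw [if_neg hnc]
      exact mul_le_mul_of_nonneg_right (Tw_le_u_pow hv0 hv1 hu0.le t t')
        (le_of_lt (div_pos (hτpos t) hs0))
    calc (∑ t' ∈ Finset.univ.filter (fun t' : ZMod L → Bool => ¬ IsC t'), W t t')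
        ≤ ∑ t' ∈ Finset.univ.filter (fun t' : ZMod L → Bool => ¬ IsC t'),
            u ^ nCh t' * (τ t / s) := Finset.sum_le_sum this
      _ = ε * (τ t / s) := by rw [← Finset.sum_mul, hε, epsSum]
      _ = τ t * s := by
          field_simp [ne_of_gt hs0]
          rw [← hss]
          ring
  -- row bounds
  have hrow : ∀ t, (∑ t', W t t') ≤ r := by
    intro t
    rw [← Finset.sum_filter_add_sum_filter_not Finset.univ (IsC (L := L)) (W t)]
    rw [filter_isC_eq]
    rw [Finset.sum_insert (by simp [cT_ne_cF]), Finset.sum_singleton]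
    have hconst_part : W t (fun _ => true) + W t (fun _ => false) ≤ 1 + v ^ L := by
      by_cases ht : IsC t
      · have hτt : τ t = 1 := by rw [hτ]; exact if_pos ht
        rcases ht with h | h
        · subst h
          have h1 : W (fun _ => true) (fun _ => true) = 1 := by
            rw [hW]
            dsimp only
            rw [Tw, nD2_const_same, nCh_const]
            rw [hτt]
            norm_num
          have h2 : W (fun _ => true) (fun _ => false) ≤ v ^ L := by
            rw [hW]
            dsimp only
            have hτcF : τ (fun _ : ZMod L => false) = 1 := by
              rw [hτ]; exact if_pos (Or.inr rfl)
            rw [hτt, hτcF, Tw, nD2_const_diff, nCh_const]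
            norm_num
          linarith
        · subst h
          have h1 : W (fun _ => false) (fun _ => false) = 1 := by
            rw [hW]
            dsimp only
            rw [Tw, nD2_const_same, nCh_const]
            rw [hτt]
            norm_num
          have h2 : W (fun _ => false) (fun _ => true) ≤ v ^ L := by
            rw [hW]
            dsimp only
            have hτcT : τ (fun _ : ZMod L => true) = 1 := by
              rw [hτ]; exact if_pos (Or.inl rfl)
            rw [hτt, hτcT, Tw, nD2_const_diff', nCh_const]
            norm_num
          linarith
      · have hτt : τ t = s := by rw [hτ]; exact if_neg ht
        have hgen : ∀ b : Bool, W t (fun _ => b) ≤ s := by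
          intro b
          rw [hW]
          dsimp only
          have hτcb : τ (fun _ : ZMod L => b) = 1 := by
            rw [hτ]
            refine if_pos ?_
            cases b
            · exact Or.inr rfl
            · exact Or.inl rfl
          rw [hτt, hτcb, div_one]
          calc Tw v u t (fun _ => b) * s ≤ 1 * s := by
                exact mul_le_mul_of_nonneg_right (Tw_le_one hv0 hv1 hu0.le hu1 _ _) hs0.le
            _ = s := one_mul s
        have hvL : 0 ≤ v ^ L := pow_nonneg hv0 _
        have := hgen true
        have := hgen false
        have hs1 : s ≤ 1 := by linarith
        calc W t (fun _ => true) + W t (fun _ => false) ≤ s + s := by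
              linarith [hgen true, hgen false]
          _ ≤ 1 + v ^ L := by linarith
    have hNC := hNCsum t
    have hτts : τ t * s ≤ s := by
      calc τ t * s ≤ 1 * s := mul_le_mul_of_nonneg_right (hτle1 t) hs0.le
        _ = s := one_mul s
    rw [hr]
    linarith
  -- column bounds
  have hcolW : ∀ t t', W t t' ≤ colb t' := by
    intro t t'
    rw [hW, hcolb]
    dsimp only
    by_cases ht' : IsC t'
    · rw [if_pos ht']
      have hτt' : τ t' = 1 := by rw [hτ]; exact if_pos ht'
      rw [hτt', div_one]
      calc Tw v u t t' * τ t ≤ 1 * 1 := by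
            exact mul_le_mul (Tw_le_one hv0 hv1 hu0.le hu1 _ _) (hτle1 t)
              (hτpos t).le zero_le_one
        _ = 1 := one_mul 1
    · rw [if_neg ht']
      have hτt' : τ t' = s := by rw [hτ]; exact if_neg ht'
      rw [hτt']
      calc Tw v u t t' * (τ t / s) ≤ u ^ nCh t' * (1 / s) := by
            refine mul_le_mul (Tw_le_u_pow hv0 hv1 hu0.le t t') ?_ ?_ (pow_nonneg hu0.le _)
            · exact (div_le_div_iff_of_pos_right hs0).mpr (hτle1 t)
            · positivity
        _ = u ^ nCh t' / s := by ring
  have hcol0 : ∀ b, 0 ≤ colb b := fun b => le_trans (hWnn b b) (hcolW b b)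
  have hcolsum : (∑ t', colb t') = 2 + s := by
    rw [← Finset.sum_filter_add_sum_filter_not Finset.univ (IsC (L := L)) colb]
    rw [filter_isC_eq, Finset.sum_insert (by simp [cT_ne_cF]), Finset.sum_singleton]
    have h1 : colb (fun _ => true) = 1 := by
      rw [hcolb]; exact if_pos (Or.inl rfl)
    have h2 : colb (fun _ => false) = 1 := by
      rw [hcolb]; exact if_pos (Or.inr rfl)
    have h3 : (∑ t' ∈ Finset.univ.filter (fun t' : ZMod L → Bool => ¬ IsC t'), colb t') = s := by
      have hcg : ∀ t' ∈ Finset.univ.filter (fun t' : ZMod L → Bool => ¬ IsC t'),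
          colb t' = u ^ nCh t' / s := by
        intro t' ht'
        rw [hcolb]
        exact if_neg (Finset.mem_filter.mp ht').2
      rw [Finset.sum_congr rfl hcg, ← Finset.sum_div]
      have : (∑ t' ∈ Finset.univ.filter (fun t' : ZMod L → Bool => ¬ IsC t'), u ^ nCh t') = ε := by
        rw [hε, epsSum]
      rw [this, ← hss]
      field_simp
    rw [h1, h2, h3]
    ring
  have hrpos : (0:ℝ) ≤ r := by
    rw [hr]
    have : 0 ≤ v ^ L := pow_nonneg hv0 _
    linarith
  calc (∑ f : ZMod L → ZMod L → Bool, ∏ d : ZMod L, Tw v u (f d) (f (d + 1)))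
      = ∑ f : ZMod L → ZMod L → Bool, ∏ d : ZMod L, W (f d) (f (d + 1)) :=
        Finset.sum_congr rfl fun f _ => (hprod f).symm
    _ ≤ (∑ b, colb b) * r ^ (L - 1) := cyclic_zmod L W colb r hWnn hcolW hrow
    _ = (2 + s) * r ^ (L - 1) := by rw [hcolsum]
    _ ≤ (5/2) * r ^ (L - 1) := by
        refine mul_le_mul_of_nonneg_right (by linarith) (pow_nonneg hrpos _)

end Transfer
end S10

namespace S10
section Reindex
variable {L : ℕ} [NeZero L]

/-- diagonal layers of a configuration -/
def lay (σ : Cfg L) : ZMod L → ZMod L → Bool := fun d i => σ (i, d - i)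

def eS (L : ℕ) [NeZero L] : (ZMod L × ZMod L) ≃ Site L where
  toFun p := (p.2, p.1 - p.2)
  invFun x := (x.1 + x.2, x.1)
  left_inv p := by
    apply Prod.ext
    · exact add_sub_cancel _ _
    · rfl
  right_inv x := by
    apply Prod.ext
    · rfl
    · exact add_sub_cancel_left _ _

lemma hup_eq (d i : ZMod L) : upN ((i, d - i) : Site L) = (i, (d + 1) - i) := by
  apply Prod.ext
  · rfl
  · show d - i + 1 = (d + 1) - i
    ring

lemma hrt_eq (d i : ZMod L) : rtN ((i, d - i) : Site L) = (i + 1, (d + 1) - (i + 1)) := by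
  apply Prod.ext
  · rfl
  · show d - i = (d + 1) - (i + 1)
    ring

lemma nUR_eq_sum (σ : Cfg L) :
    nUR L σ = ∑ d : ZMod L, nD2 (lay σ d) (lay σ (d + 1)) := by
  rw [nUR]
  rw [Finset.card_filter]
  rw [← Equiv.sum_comp (eS L) (fun x : Site L =>
    if σ x ≠ σ (upN x) ∧ σ x ≠ σ (rtN x) then (1 : ℕ) else 0)]
  rw [Fintype.sum_prod_type]
  refine Finset.sum_congr rfl fun d _ => ?_
  rw [nD2, Finset.card_filter]
  refine Finset.sum_congr rfl fun i _ => ?_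
  have h1 : (eS L) (d, i) = ((i, d - i) : Site L) := rfl
  rw [h1, hup_eq d i, hrt_eq d i]
  rfl

lemma neq_eq_sum (σ : Cfg L) :
    (Finset.univ.filter fun x : Site L => σ (upN x) ≠ σ (rtN x)).card
      = ∑ d : ZMod L, nCh (lay σ (d + 1)) := by
  rw [Finset.card_filter]
  rw [← Equiv.sum_comp (eS L) (fun x : Site L => if σ (upN x) ≠ σ (rtN x) then (1 : ℕ) else 0)]
  rw [Fintype.sum_prod_type]
  refine Finset.sum_congr rfl fun d _ => ?_
  rw [nCh, Finset.card_filter]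
  refine Finset.sum_congr rfl fun i _ => ?_
  have h1 : (eS L) (d, i) = ((i, d - i) : Site L) := rfl
  rw [h1, hup_eq d i, hrt_eq d i]
  rfl

lemma bool_count (a b c : Bool) :
    ((if a ≠ b then 1 else 0) : ℕ) + (if a ≠ c then 1 else 0)
      = 2 * (if a ≠ b ∧ a ≠ c then 1 else 0) + (if b ≠ c then 1 else 0) := by
  cases a <;> cases b <;> cases c <;> simp

lemma contour_decomp (σ : Cfg L) :
    contourLen L σ = 2 * nUR L σ + ∑ d : ZMod L, nCh (lay σ (d + 1)) := by
  rw [contourLen, nUR, ← neq_eq_sum σ]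
  rw [Finset.card_filter, Finset.card_filter, Finset.card_filter, Finset.card_filter]
  rw [← Finset.sum_add_distrib, Finset.mul_sum, ← Finset.sum_add_distrib]
  exact Finset.sum_congr rfl fun x _ => bool_count (σ x) (σ (upN x)) (σ (rtN x))

lemma two_nUR_le_contour (σ : Cfg L) : 2 * nUR L σ ≤ contourLen L σ := by
  rw [contour_decomp σ]
  omega

lemma weight_eq (σ : Cfg L) (v u : ℝ) :
    v ^ (nUR L σ) * u ^ (contourLen L σ - 2 * nUR L σ)
      = ∏ d : ZMod L, Tw v u (lay σ d) (lay σ (d + 1)) := by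
  have h1 : contourLen L σ - 2 * nUR L σ = ∑ d : ZMod L, nCh (lay σ (d + 1)) := by
    have := contour_decomp σ
    omega
  rw [h1, nUR_eq_sum σ]
  rw [← Finset.prod_pow_eq_pow_sum, ← Finset.prod_pow_eq_pow_sum, ← Finset.prod_mul_distrib]
  rfl

def eCfg (L : ℕ) [NeZero L] : Cfg L ≃ (ZMod L → ZMod L → Bool) where
  toFun := lay
  invFun s := fun x => s (x.1 + x.2) x.1
  left_inv σ := by
    funext x
    show σ (x.1, (x.1 + x.2) - x.1) = σ x
    rw [add_sub_cancel_left]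
  right_inv s := by
    funext d i
    show s (i + (d - i)) i = s d i
    rw [add_sub_cancel]

lemma sum_weight_eq (v u : ℝ) :
    (∑ σ : Cfg L, v ^ (nUR L σ) * u ^ (contourLen L σ - 2 * nUR L σ))
      = ∑ f : ZMod L → ZMod L → Bool, ∏ d : ZMod L, Tw v u (f d) (f (d + 1)) := by
  rw [← Equiv.sum_comp (eCfg L)
    (fun f : ZMod L → ZMod L → Bool => ∏ d : ZMod L, Tw v u (f d) (f (d + 1)))]
  exact Finset.sum_congr rfl fun σ _ => weight_eq σ v u

end Reindex
end S10

namespace S10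
section Geometry
variable {L : ℕ} [NeZero L]

def isMark (σ : Cfg L) (p : Site L × Bool) : Prop :=
  if p.2 then σ p.1 ≠ σ (upN p.1) else σ p.1 ≠ σ (rtN p.1)

instance (σ : Cfg L) : DecidablePred (isMark σ) := fun p => by unfold isMark; infer_instance

def diagOf {L : ℕ} (p : Site L × Bool) : ZMod L := p.1.1 + p.1.2

lemma no_corner {σ : Cfg L} (hcor : nUR L σ = 0) :
    ∀ y : Site L, ¬(σ y ≠ σ (upN y) ∧ σ y ≠ σ (rtN y)) := by
  intro y hy
  have hmem : y ∈ Finset.univ.filter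
      (fun x : Site L => σ x ≠ σ (upN x) ∧ σ x ≠ σ (rtN x)) := by
    simp only [Finset.mem_filter, Finset.mem_univ, true_and]
    exact hy
  rw [nUR, Finset.card_eq_zero] at hcor
  rw [hcor] at hmem
  simp at hmem

lemma rt_up_comm (x : Site L) : rtN (upN x) = upN (rtN x) := rfl

lemma step_mark {σ : Cfg L} (hcor : nUR L σ = 0) {p : Site L × Bool} (hp : isMark σ p) :
    ∃ p' : Site L × Bool, isMark σ p' ∧ diagOf p' = diagOf p + 1 := by
  obtain ⟨x, b⟩ := p
  have hnoc := no_corner hcor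
  cases b
  · -- vertical mark: σ x ≠ σ (rtN x)
    have hV : σ x ≠ σ (rtN x) := by simpa [isMark] using hp
    have hU : σ (upN x) = σ x := by
      by_contra h
      exact hnoc x ⟨fun h' => h h'.symm, hV⟩
    by_cases h : σ (upN (rtN x)) = σ (rtN x)
    · refine ⟨(upN x, false), ?_, ?_⟩
      · show σ (upN x) ≠ σ (rtN (upN x))
        rw [rt_up_comm, h, hU]
        exact hV
      · show (upN x).1 + (upN x).2 = (x.1 + x.2) + 1
        show x.1 + (x.2 + 1) = (x.1 + x.2) + 1
        ring
    · refine ⟨(rtN x, true), ?_, ?_⟩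
      · show σ (rtN x) ≠ σ (upN (rtN x))
        exact fun h' => h h'.symm
      · show (rtN x).1 + (rtN x).2 = (x.1 + x.2) + 1
        show (x.1 + 1) + x.2 = (x.1 + x.2) + 1
        ring
  · -- horizontal mark: σ x ≠ σ (upN x)
    have hH : σ x ≠ σ (upN x) := by simpa [isMark] using hp
    have hR : σ (rtN x) = σ x := by
      by_contra h
      exact hnoc x ⟨hH, fun h' => h h'.symm⟩
    by_cases h : σ (upN (rtN x)) = σ (rtN x)
    · refine ⟨(upN x, false), ?_, ?_⟩
      · show σ (upN x) ≠ σ (rtN (upN x))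
        rw [rt_up_comm, h, hR]
        exact fun h' => hH h'.symm
      · show x.1 + (x.2 + 1) = (x.1 + x.2) + 1
        ring
    · refine ⟨(rtN x, true), ?_, ?_⟩
      · show σ (rtN x) ≠ σ (upN (rtN x))
        exact fun h' => h h'.symm
      · show (x.1 + 1) + x.2 = (x.1 + x.2) + 1
        ring

lemma exists_mark {σ : Cfg L} (hσp : σ ≠ plusCfg L) (hσm : σ ≠ minusCfg L) :
    ∃ p : Site L × Bool, isMark σ p := by
  by_contra hno
  push_neg at hno
  have hU : ∀ y : Site L, σ (upN y) = σ y := by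
    intro y
    have := hno (y, true)
    simp only [isMark] at this
    have h2 : σ y = σ (upN y) := not_not.mp (by simpa using this)
    exact h2.symm
  have hR : ∀ y : Site L, σ (rtN y) = σ y := by
    intro y
    have := hno (y, false)
    simp only [isMark] at this
    have h2 : σ y = σ (rtN y) := not_not.mp (by simpa using this)
    exact h2.symm
  have hnat : ∀ (j i : ℕ), σ (((i : ℕ) : ZMod L), ((j : ℕ) : ZMod L)) = σ (0, 0) := by
    intro j
    induction j with
    | zero =>
      intro i
      induction i with
      | zero => simp
      | succ i ih =>
        have hcast : (((i + 1 : ℕ)) : ZMod L) = ((i : ℕ) : ZMod L) + 1 := by push_cast; ring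
        rw [hcast]
        have := hR (((i : ℕ) : ZMod L), ((0 : ℕ) : ZMod L))
        rw [rtN] at this
        simp only at this
        rw [← ih]
        simp only [Nat.cast_zero] at *
        exact this
    | succ j ih =>
      intro i
      have hcast : (((j + 1 : ℕ)) : ZMod L) = ((j : ℕ) : ZMod L) + 1 := by push_cast; ring
      rw [hcast]
      have := hU (((i : ℕ) : ZMod L), ((j : ℕ) : ZMod L))
      rw [upN] at this
      simp only at this
      rw [this]
      exact ih i
  have hconst : ∀ x : Site L, σ x = σ (0, 0) := by
    intro x
    have h1 : ((x.1.val : ℕ) : ZMod L) = x.1 := ZMod.natCast_zmod_val x.1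
    have h2 : ((x.2.val : ℕ) : ZMod L) = x.2 := ZMod.natCast_zmod_val x.2
    have := hnat x.2.val x.1.val
    rw [h1, h2] at this
    simpa using this
  cases h00 : σ (0, 0)
  · apply hσm
    funext x
    rw [hconst x, h00]
    rfl
  · apply hσp
    funext x
    rw [hconst x, h00]
    rfl

lemma contour_ge_L {σ : Cfg L} (hσp : σ ≠ plusCfg L) (hσm : σ ≠ minusCfg L)
    (hcor : nUR L σ = 0) : L ≤ contourLen L σ := by
  classical
  obtain ⟨p₀, hp₀⟩ := exists_mark hσp hσm
  let M := {p : Site L × Bool // isMark σ p}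
  let F : M → M := fun q => ⟨(step_mark hcor q.2).choose, (step_mark hcor q.2).choose_spec.1⟩
  let f : ℕ → M := fun n => F^[n] ⟨p₀, hp₀⟩
  have hdiag : ∀ n : ℕ, diagOf (f n).1 = diagOf p₀ + (n : ZMod L) := by
    intro n
    induction n with
    | zero => simp [f]
    | succ n ih =>
      have hit : f (n + 1) = F (f n) := Function.iterate_succ_apply' F n _
      have hstep : diagOf (F (f n)).1 = diagOf (f n).1 + 1 :=
        (step_mark hcor (f n).2).choose_spec.2
      rw [hit, hstep, ih]
      push_cast
      ring
  have hinj : ∀ m n : ℕ, m < L → n < L → f m = f n → m = n := by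
    intro m n hm hn h
    have h1 : diagOf (f m).1 = diagOf (f n).1 := by rw [h]
    rw [hdiag, hdiag] at h1
    have h2 : ((m : ℕ) : ZMod L) = ((n : ℕ) : ZMod L) := by
      exact add_left_cancel h1
    have h3 := congrArg ZMod.val h2
    rw [ZMod.val_cast_of_lt hm, ZMod.val_cast_of_lt hn] at h3
    exact h3
  let g : Fin L → Site L × Bool := fun n => (f n.val).1
  have hginj : Function.Injective g := by
    intro m n h
    have hfm : f m.val = f n.val := by
      apply Subtype.ext
      exact h
    exact Fin.ext (hinj m.val n.val m.isLt n.isLt hfm)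
  have hgmark : ∀ n : Fin L, isMark σ (g n) := fun n => (f n.val).2
  set AH := Finset.univ.filter (fun x : Site L => σ x ≠ σ (upN x)) with hAH
  set AV := Finset.univ.filter (fun x : Site L => σ x ≠ σ (rtN x)) with hAV
  set SH := Finset.univ.filter (fun n : Fin L => (g n).2 = true) with hSH
  set SV := Finset.univ.filter (fun n : Fin L => ¬ ((g n).2 = true)) with hSV
  have hcards : SH.card + SV.card = L := by
    rw [hSH, hSV]
    rw [Finset.card_filter_add_card_filter_not]
    rw [Finset.card_univ, Fintype.card_fin]
  have hH : SH.card ≤ AH.card := by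
    refine Finset.card_le_card_of_injOn (fun n => (g n).1) ?_ ?_
    · intro n hn
      have hb : (g n).2 = true := (Finset.mem_filter.mp hn).2
      have := hgmark n
      rw [isMark, hb] at this
      simp only [if_true] at this
      simp only [hAH, Finset.mem_filter, Finset.mem_univ, true_and]
      simpa [hAH] using this
    · intro m hm n hn h
      apply hginj
      apply Prod.ext h
      rw [(Finset.mem_filter.mp hm).2, (Finset.mem_filter.mp hn).2]
  have hV : SV.card ≤ AV.card := by
    refine Finset.card_le_card_of_injOn (fun n => (g n).1) ?_ ?_
    · intro n hn
      have hb : ¬ ((g n).2 = true) := (Finset.mem_filter.mp hn).2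
      have hb' : (g n).2 = false := by simpa using hb
      have := hgmark n
      rw [isMark, hb'] at this
      simp at this
      simp only [hAV, Finset.mem_filter, Finset.mem_univ, true_and]
      simpa [hAV] using this
    · intro m hm n hn h
      apply hginj
      apply Prod.ext h
      have h1 : (g m).2 = false := by simpa using (Finset.mem_filter.mp hm).2
      have h2 : (g n).2 = false := by simpa using (Finset.mem_filter.mp hn).2
      rw [h1, h2]
  calc L = SH.card + SV.card := hcards.symm
    _ ≤ AH.card + AV.card := Nat.add_le_add hH hV
    _ = contourLen L σ := rfl

end Geometry
end S10

namespace S10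
section Energy
variable {L : ℕ} [NeZero L]

lemma sum_spin_eq (J : ℝ) (σ : Cfg L) :
    (∑ x : Site L, spin (σ x) * (spin (σ (upN x)) + spin (σ (rtN x))))
      = 2 * (Fintype.card (Site L) : ℝ) - 2 * (contourLen L σ : ℝ) := by
  have hterm : ∀ x : Site L, spin (σ x) * (spin (σ (upN x)) + spin (σ (rtN x)))
      = (1 - 2 * (if σ x ≠ σ (upN x) then (1:ℝ) else 0))
        + (1 - 2 * (if σ x ≠ σ (rtN x) then (1:ℝ) else 0)) := by
    intro x
    cases h1 : σ x <;> cases h2 : σ (upN x) <;> cases h3 : σ (rtN x) <;>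
      simp [spin, h1, h2, h3] <;> norm_num
  rw [Finset.sum_congr rfl fun x _ => hterm x]
  rw [Finset.sum_add_distrib, Finset.sum_sub_distrib, Finset.sum_sub_distrib]
  rw [← Finset.mul_sum, ← Finset.mul_sum, Finset.sum_boole, Finset.sum_boole]
  simp only [contourLen, Finset.sum_const, nsmul_eq_mul, mul_one, Finset.card_univ]
  push_cast
  ring

lemma exp_isingH (J : ℝ) (σ : Cfg L) :
    Real.exp (-(isingH L J σ))
      = Real.exp (2 * J * (Fintype.card (Site L) : ℝ))
          * Real.exp (-(2 * J) * (contourLen L σ : ℝ)) := by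
  rw [← Real.exp_add]
  congr 1
  rw [isingH, sum_spin_eq J σ]
  ring

lemma nUR_plus : nUR L (plusCfg L) = 0 := by
  rw [nUR, Finset.card_eq_zero]
  ext x
  simp [plusCfg]

lemma nUR_minus : nUR L (minusCfg L) = 0 := by
  rw [nUR, Finset.card_eq_zero]
  ext x
  simp [minusCfg]

lemma contourLen_plus : contourLen L (plusCfg L) = 0 := by
  rw [contourLen]
  have h1 : (Finset.univ.filter fun x : Site L => plusCfg L x ≠ plusCfg L (upN x)) = ∅ := by
    ext x; simp [plusCfg]
  have h2 : (Finset.univ.filter fun x : Site L => plusCfg L x ≠ plusCfg L (rtN x)) = ∅ := by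
    ext x; simp [plusCfg]
  rw [h1, h2]
  simp

lemma contourLen_minus : contourLen L (minusCfg L) = 0 := by
  rw [contourLen]
  have h1 : (Finset.univ.filter fun x : Site L => minusCfg L x ≠ minusCfg L (upN x)) = ∅ := by
    ext x; simp [minusCfg]
  have h2 : (Finset.univ.filter fun x : Site L => minusCfg L x ≠ minusCfg L (rtN x)) = ∅ := by
    ext x; simp [minusCfg]
  rw [h1, h2]
  simp

lemma plus_ne_minus : plusCfg L ≠ minusCfg L := by
  intro h
  have := congrFun h (0, 0)
  simp [plusCfg, minusCfg] at this

lemma Zg_ge (J : ℝ) : 2 * Real.exp (2 * J * (Fintype.card (Site L) : ℝ)) ≤ Zg L J := by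
  rw [Zg]
  have hsub : ({plusCfg L, minusCfg L} : Finset (Cfg L)) ⊆ Finset.univ :=
    Finset.subset_univ _
  have hmono := Finset.sum_le_sum_of_subset_of_nonneg hsub
    (fun τ _ _ => (Real.exp_pos (-(isingH L J τ))).le)
  rw [Finset.sum_pair plus_ne_minus] at hmono
  rw [exp_isingH J, exp_isingH J, contourLen_plus, contourLen_minus] at hmono
  simp only [Nat.cast_zero, mul_zero, Real.exp_zero, mul_one] at hmono
  linarith

lemma gDens_eq (J q : ℝ) (σ : Cfg L) :
    gDens L J q σ
      = ((1 + deltaQ q * Real.exp (4 * J)) / (1 + deltaQ q * Real.exp (-(4 * J)))) ^ (nUR L σ)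
        * ((1 + deltaQ q) / (1 + deltaQ q * Real.exp (-(4 * J))))
            ^ (contourLen L σ - 2 * nUR L σ) := by
  rw [gDens]
  congr 1
  have h := two_nUR_le_contour (σ := σ)
  rw [show ((contourLen L σ : ℝ) - 2 * (nUR L σ : ℝ))
      = ((contourLen L σ - 2 * nUR L σ : ℕ) : ℝ) by
    rw [Nat.cast_sub h]; push_cast; ring]
  exact Real.rpow_natCast _ _

lemma gDens_pos (J q : ℝ) (σ : Cfg L) : 0 < gDens L J q σ := by
  rw [gDens, deltaQ]
  have h1 : 0 < 1 + Real.exp (-(2*q)) * Real.exp (4 * J) := by positivity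
  have h2 : 0 < 1 + Real.exp (-(2*q)) * Real.exp (-(4 * J)) := by positivity
  have h3 : 0 < 1 + Real.exp (-(2*q)) := by positivity
  positivity

lemma gDens_plus (J q : ℝ) : gDens L J q (plusCfg L) = 1 := by
  rw [gDens, nUR_plus, contourLen_plus]
  norm_num

lemma gDens_minus (J q : ℝ) : gDens L J q (minusCfg L) = 1 := by
  rw [gDens, nUR_minus, contourLen_minus]
  norm_num

end Energy
end S10

set_option maxHeartbeats 2000000 in
open S10 in
/-- In the low temperature regime `J = k log L`, `q = c (log L)/L` with
`k > 1` and `c > 2`, for all large enough `L`: `g(1) = g(−1) = 1`; every configuration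
`σ ∉ {1, −1}` satisfies `g(σ) > π_G(g)`; and in particular `g(σ) ≥ (5/4)^L` whenever
`n_ur(σ) = 0` and `σ ∉ {1, −1}`. -/
theorem stmt10 (k c : ℝ) (hk : 1 < k) (hc : 2 < c) :
    ∃ L₀ : ℕ, ∀ L : ℕ, L₀ ≤ L → ∀ (h2 : 2 ≤ L),
      haveI : NeZero L := ⟨by omega⟩
      (gDens L (k * Real.log L) (c * Real.log L / L) (plusCfg L) = 1 ∧
        gDens L (k * Real.log L) (c * Real.log L / L) (minusCfg L) = 1) ∧
      (∀ σ : Cfg L, σ ≠ plusCfg L → σ ≠ minusCfg L →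
        (∑ τ : Cfg L,
            piG L (k * Real.log L) τ * gDens L (k * Real.log L) (c * Real.log L / L) τ)
          < gDens L (k * Real.log L) (c * Real.log L / L) σ) ∧
      (∀ σ : Cfg L, σ ≠ plusCfg L → σ ≠ minusCfg L → nUR L σ = 0 →
        ((5 : ℝ) / 4) ^ L ≤ gDens L (k * Real.log L) (c * Real.log L / L) σ) := by
  -- eventual smallness conditions
  have t1 : Filter.Tendsto (fun n : ℕ => c * (Real.log n / (n : ℝ))) atTop (nhds 0) := by
    have h0 : Filter.Tendsto (fun x : ℝ => Real.log x / x) atTop (nhds 0) := by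
      have := Real.isLittleO_log_id_atTop.tendsto_div_nhds_zero
      simpa using this
    have h1 := (h0.comp tendsto_natCast_atTop_atTop).const_mul c
    simpa using h1
  have trpow : ∀ a : ℝ, a < 0 →
      Filter.Tendsto (fun n : ℕ => ((n : ℝ) ^ a)) atTop (nhds 0) := by
    intro a ha
    have := (tendsto_rpow_neg_atTop (y := -a) (by linarith)).comp tendsto_natCast_atTop_atTop
    simpa [Function.comp_def] using this
  have t2 := trpow (2 - 2*k) (by linarith)
  have t3 := trpow (1 - 2*k) (by linarith)
  have t4 := trpow (1 - 2*c) (by linarith)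
  have e1 := t1.eventually (eventually_le_nhds (by norm_num : (0:ℝ) < 1/4))
  have e2 := t2.eventually (eventually_le_nhds (by norm_num : (0:ℝ) < 1/40))
  have e3 := t3.eventually (eventually_le_nhds (by norm_num : (0:ℝ) < 1/8))
  have e4 := t4.eventually (eventually_le_nhds (by norm_num : (0:ℝ) < 1/30))
  have e5 : ∀ᶠ n : ℕ in atTop, 7 ≤ n := Filter.eventually_ge_atTop 7
  have hev : ∀ᶠ n : ℕ in atTop,
      (c * (Real.log n / (n : ℝ)) ≤ 1/4 ∧ ((n:ℝ) ^ (2-2*k)) ≤ 1/40 ∧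
        ((n:ℝ) ^ (1-2*k)) ≤ 1/8 ∧ ((n:ℝ) ^ (1-2*c)) ≤ 1/30 ∧ 7 ≤ n) := by
    filter_upwards [e1, e2, e3, e4, e5] with n h1 h2 h3 h4 h5
    exact ⟨h1, h2, h3, h4, h5⟩
  obtain ⟨L₀, hL₀⟩ := Filter.eventually_atTop.mp hev
  refine ⟨L₀, fun L hLL h2L => ?_⟩
  obtain ⟨h1c, h2c, h3c, h4c, h7⟩ := hL₀ L hLL
  haveI : NeZero L := ⟨by omega⟩
  set J := k * Real.log L with hJdef
  set q := c * Real.log L / L with hqdef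
  -- basic positivity
  have hL0 : (0:ℝ) < L := by exact_mod_cast (by omega : 0 < L)
  have hL1 : (1:ℝ) < L := by exact_mod_cast (by omega : 1 < L)
  have hL1' : (1:ℝ) ≤ L := hL1.le
  have hlog : 0 < Real.log L := Real.log_pos hL1
  have hq0 : 0 < q := by
    rw [hqdef]
    exact div_pos (mul_pos (by linarith) hlog) hL0
  have hq14 : q ≤ 1/4 := by
    rw [hqdef, mul_div_assoc]
    exact h1c
  have hJ0 : 0 < J := mul_pos (by linarith) hlog
  -- delta bounds
  have hdpos : 0 < deltaQ q := Real.exp_pos _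
  have hd1 : deltaQ q ≤ 1 := by
    rw [deltaQ]
    have := Real.exp_le_exp.mpr (show -(2*q) ≤ 0 by linarith)
    simpa using this
  have hdhalf : 1/2 ≤ deltaQ q := by
    rw [deltaQ]
    have := Real.add_one_le_exp (-(2*q))
    linarith
  -- exponentials as rpow
  have hE2r : Real.exp (-(2*J)) = (L:ℝ) ^ (-(2*k)) := by
    rw [Real.rpow_def_of_pos hL0, hJdef]
    congr 1
    ring
  have hE4r : Real.exp (-(4*J)) = (L:ℝ) ^ (-(4*k)) := by
    rw [Real.rpow_def_of_pos hL0, hJdef]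
    congr 1
    ring
  have hrp_mono : ∀ a b : ℝ, a ≤ b → (L:ℝ)^a ≤ (L:ℝ)^b := fun a b h =>
    Real.rpow_le_rpow_of_exponent_le hL1' h
  have hE2pos : 0 < Real.exp (-(2*J)) := Real.exp_pos _
  have hE4pos : 0 < Real.exp (-(4*J)) := Real.exp_pos _
  have hLE2 : (L:ℝ) * Real.exp (-(2*J)) ≤ (L:ℝ) ^ (1-2*k) := by
    rw [hE2r]
    calc (L:ℝ) * (L:ℝ) ^ (-(2*k)) = (L:ℝ) ^ (1:ℝ) * (L:ℝ) ^ (-(2*k)) := by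
          rw [Real.rpow_one]
      _ = (L:ℝ) ^ (1 + -(2*k)) := (Real.rpow_add hL0 _ _).symm
      _ ≤ (L:ℝ) ^ (1-2*k) := by
          apply hrp_mono
          ring_nf
          exact le_refl _
  have hLE2' : (L:ℝ) * Real.exp (-(2*J)) ≤ 1/8 := le_trans hLE2 h3c
  have hE2le : Real.exp (-(2*J)) ≤ 1/8 := by
    have := le_mul_of_one_le_left hE2pos.le hL1'
    linarith
  have hE4leE2 : Real.exp (-(4*J)) ≤ Real.exp (-(2*J)) := by
    rw [hE2r, hE4r]
    exact hrp_mono _ _ (by linarith)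
  have hE4le : Real.exp (-(4*J)) ≤ 1/8 := le_trans hE4leE2 hE2le
  have hLE4 : (L:ℝ) * Real.exp (-(4*J)) ≤ 1/8 := by
    have := mul_le_mul_of_nonneg_left hE4leE2 hL0.le
    linarith
  -- exp(4J) large
  have hexp4J : (16:ℝ) ≤ Real.exp (4*J) := by
    have hlog2 : Real.log 2 ≤ Real.log L := Real.log_le_log (by norm_num) (by exact_mod_cast h2L)
    have h16 : Real.log 16 = 4 * Real.log 2 := by
      rw [show (16:ℝ) = 2^(4:ℕ) by norm_num, Real.log_pow]
      push_cast
      ring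
    have : Real.log 16 ≤ 4*J := by
      rw [h16, hJdef]
      have hk1 : Real.log L ≤ k * Real.log L := le_mul_of_one_le_left hlog.le hk.le
      linarith
    calc (16:ℝ) = Real.exp (Real.log 16) := (Real.exp_log (by norm_num)).symm
      _ ≤ Real.exp (4*J) := Real.exp_le_exp.mpr this
  -- A and B bounds
  set A := (1 + deltaQ q * Real.exp (4*J)) / (1 + deltaQ q * Real.exp (-(4*J))) with hA
  set B := (1 + deltaQ q) / (1 + deltaQ q * Real.exp (-(4*J))) with hB
  have hdenom1 : (1:ℝ) ≤ 1 + deltaQ q * Real.exp (-(4*J)) := by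
    have := mul_nonneg hdpos.le hE4pos.le
    linarith
  have hdenom0 : (0:ℝ) < 1 + deltaQ q * Real.exp (-(4*J)) := by linarith
  have hdE4 : deltaQ q * Real.exp (-(4*J)) ≤ 1/8 := by
    calc deltaQ q * Real.exp (-(4*J)) ≤ 1 * Real.exp (-(4*J)) :=
          mul_le_mul_of_nonneg_right hd1 hE4pos.le
      _ ≤ 1/8 := by linarith
  have hdenom2 : 1 + deltaQ q * Real.exp (-(4*J)) ≤ 2 := by linarith
  have hnumA : (9:ℝ) ≤ 1 + deltaQ q * Real.exp (4*J) := by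
    have h8 : (1/2 : ℝ) * 16 ≤ deltaQ q * Real.exp (4*J) :=
      mul_le_mul hdhalf hexp4J (by norm_num) hdpos.le
    linarith
  have hA92 : (9/2 : ℝ) ≤ A := by
    rw [hA]
    calc (9/2 : ℝ) ≤ (1 + deltaQ q * Real.exp (4*J)) / 2 := by linarith
      _ ≤ (1 + deltaQ q * Real.exp (4*J)) / (1 + deltaQ q * Real.exp (-(4*J))) := by
          apply div_le_div_of_nonneg_left (by linarith) hdenom0 hdenom2
  have hA1 : (1:ℝ) ≤ A := by linarith
  have hB54 : (5/4 : ℝ) ≤ B := by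
    rw [hB, le_div_iff₀ hdenom0]
    linarith
  have hB1 : (1:ℝ) ≤ B := by linarith
  have hB2 : B ≤ 2 := by
    rw [hB]
    calc (1 + deltaQ q) / (1 + deltaQ q * Real.exp (-(4*J))) ≤ (1 + deltaQ q) / 1 := by
          apply div_le_div_of_nonneg_left (by linarith) (by norm_num) hdenom1
      _ ≤ 2 := by linarith
  -- transfer parameters
  set vpar := A * Real.exp (-(2*J)) ^ 2 with hv
  set upar := B * Real.exp (-(2*J)) with hu
  have hu0 : 0 < upar := by
    rw [hu]
    exact mul_pos (by linarith) hE2pos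
  have hupar2E2 : upar ≤ 2 * Real.exp (-(2*J)) := by
    rw [hu]
    exact mul_le_mul_of_nonneg_right hB2 hE2pos.le
  have hu1 : upar ≤ 1 := by linarith
  have hLu : (L:ℝ) * upar ≤ 1/4 := by
    have h1 : (L:ℝ) * upar ≤ (L:ℝ) * (2 * Real.exp (-(2*J))) :=
      mul_le_mul_of_nonneg_left hupar2E2 hL0.le
    have h2 : (L:ℝ) * (2 * Real.exp (-(2*J))) = 2 * ((L:ℝ) * Real.exp (-(2*J))) := by ring
    linarith
  have hv0 : 0 ≤ vpar := by
    rw [hv]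
    positivity
  have hE2sq : Real.exp (-(2*J)) ^ 2 = Real.exp (-(4*J)) := by
    rw [sq, ← Real.exp_add]
    congr 1
    ring
  have hprod1 : Real.exp (4*J) * Real.exp (-(4*J)) = 1 := by
    rw [← Real.exp_add]
    norm_num
  have hveq : vpar = (Real.exp (-(4*J)) + deltaQ q) / (1 + deltaQ q * Real.exp (-(4*J))) := by
    rw [hv, hE2sq, hA, div_mul_eq_mul_div]
    congr 1
    linear_combination deltaQ q * hprod1
  have hv1 : vpar ≤ 1 := by
    rw [hveq, div_le_one hdenom0]
    have hint : (0:ℝ) ≤ (1 - deltaQ q) * (1 - Real.exp (-(4*J))) :=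
      mul_nonneg (by linarith) (by linarith)
    have hint2 : (1 - deltaQ q) * (1 - Real.exp (-(4*J)))
        = 1 - deltaQ q - Real.exp (-(4*J)) + deltaQ q * Real.exp (-(4*J)) := by ring
    linarith
  -- bound on L * vpar^L
  have hvpowL : (L:ℝ) * vpar ^ L ≤ 1/10 := by
    have hstep1 : vpar ≤ deltaQ q * (1 + 2 * Real.exp (-(4*J))) := by
      have h1 : vpar ≤ Real.exp (-(4*J)) + deltaQ q := by
        rw [hveq]
        exact div_le_self (by positivity) hdenom1
      have hint : (0:ℝ) ≤ Real.exp (-(4*J)) * (2 * deltaQ q - 1) :=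
        mul_nonneg hE4pos.le (by linarith)
      have e1 : Real.exp (-(4*J)) * (2 * deltaQ q - 1)
          = 2 * (deltaQ q * Real.exp (-(4*J))) - Real.exp (-(4*J)) := by ring
      have e2 : deltaQ q * (1 + 2 * Real.exp (-(4*J)))
          = deltaQ q + 2 * (deltaQ q * Real.exp (-(4*J))) := by ring
      linarith
    have hstep2 : vpar ^ L ≤ (deltaQ q * (1 + 2 * Real.exp (-(4*J)))) ^ L :=
      pow_le_pow_left₀ hv0 hstep1 L
    have hstep3 : (deltaQ q * (1 + 2 * Real.exp (-(4*J)))) ^ L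
        = deltaQ q ^ L * (1 + 2 * Real.exp (-(4*J))) ^ L := mul_pow _ _ L
    have hqL : (L:ℝ) * q = c * Real.log L := by
      rw [hqdef]
      field_simp
    have hstep4 : deltaQ q ^ L = (L:ℝ) ^ (-(2*c)) := by
      rw [deltaQ, ← Real.exp_nat_mul, Real.rpow_def_of_pos hL0]
      congr 1
      have : (L:ℝ) * -(2*q) = -(2*((L:ℝ)*q)) := by ring
      rw [this, hqL]
      ring
    have hstep5 : (1 + 2 * Real.exp (-(4*J))) ^ L ≤ 3 := by
      have h1 : 1 + 2 * Real.exp (-(4*J)) ≤ Real.exp (2 * Real.exp (-(4*J))) := by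
        have := Real.add_one_le_exp (2 * Real.exp (-(4*J)))
        linarith
      have h2 : (1 + 2 * Real.exp (-(4*J))) ^ L ≤ Real.exp (2 * Real.exp (-(4*J))) ^ L :=
        pow_le_pow_left₀ (by positivity) h1 L
      have h3 : Real.exp (2 * Real.exp (-(4*J))) ^ L
          = Real.exp ((L:ℝ) * (2 * Real.exp (-(4*J)))) := (Real.exp_nat_mul _ L).symm
      have h4 : (L:ℝ) * (2 * Real.exp (-(4*J))) ≤ 1 := by
        have e1 : (L:ℝ) * (2 * Real.exp (-(4*J))) = 2 * ((L:ℝ) * Real.exp (-(4*J))) := by ring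
        linarith
      have h5 : Real.exp ((L:ℝ) * (2 * Real.exp (-(4*J)))) ≤ Real.exp 1 :=
        Real.exp_le_exp.mpr h4
      have h6 := Real.exp_one_lt_d9
      calc (1 + 2 * Real.exp (-(4*J))) ^ L ≤ Real.exp ((L:ℝ) * (2 * Real.exp (-(4*J)))) := by
            rw [← h3]; exact h2
        _ ≤ Real.exp 1 := h5
        _ ≤ 3 := by linarith
    have hLrp : (L:ℝ) * (L:ℝ) ^ (-(2*c)) = (L:ℝ) ^ (1-2*c) := by
      calc (L:ℝ) * (L:ℝ) ^ (-(2*c)) = (L:ℝ) ^ (1:ℝ) * (L:ℝ) ^ (-(2*c)) := by rw [Real.rpow_one]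
        _ = (L:ℝ) ^ (1 + -(2*c)) := (Real.rpow_add hL0 _ _).symm
        _ = (L:ℝ) ^ (1-2*c) := by ring_nf
    have hrppos : (0:ℝ) ≤ (L:ℝ) ^ (-(2*c)) := Real.rpow_nonneg hL0.le _
    calc (L:ℝ) * vpar ^ L ≤ (L:ℝ) * ((L:ℝ) ^ (-(2*c)) * 3) := by
          have : vpar ^ L ≤ (L:ℝ) ^ (-(2*c)) * 3 := by
            calc vpar ^ L ≤ deltaQ q ^ L * (1 + 2 * Real.exp (-(4*J))) ^ L := by
                  rw [← hstep3]; exact hstep2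
              _ ≤ (L:ℝ) ^ (-(2*c)) * 3 := by
                  rw [hstep4]
                  exact mul_le_mul_of_nonneg_left hstep5 hrppos
          exact mul_le_mul_of_nonneg_left this hL0.le
      _ = 3 * ((L:ℝ) * (L:ℝ) ^ (-(2*c))) := by ring
      _ = 3 * (L:ℝ) ^ (1-2*c) := by rw [hLrp]
      _ ≤ 1/10 := by
          have := mul_le_mul_of_nonneg_left h4c (by norm_num : (0:ℝ) ≤ 3)
          linarith
  -- sqrt eps bounds
  have hLu2 : (L:ℝ) * upar ≤ 1/2 := by linarith
  have hepsle : epsSum L upar ≤ 4 * ((L:ℝ) * upar)^2 := epsSum_le hu0.le hLu2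
  have hsv2 : Real.sqrt (epsSum L upar) ≤ 2 * ((L:ℝ) * upar) := by
    have h1 := Real.sqrt_le_sqrt hepsle
    rw [show 4*((L:ℝ)*upar)^2 = (2*((L:ℝ)*upar))^2 by ring, Real.sqrt_sq (by positivity)] at h1
    exact h1
  have hsv0 : 0 ≤ Real.sqrt (epsSum L upar) := Real.sqrt_nonneg _
  have hLL2 : (L:ℝ) * ((L:ℝ) * Real.exp (-(2*J))) ≤ (L:ℝ) ^ (2-2*k) := by
    calc (L:ℝ) * ((L:ℝ) * Real.exp (-(2*J))) ≤ (L:ℝ) * (L:ℝ) ^ (1-2*k) := by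
          exact mul_le_mul_of_nonneg_left hLE2 hL0.le
      _ = (L:ℝ) ^ (1:ℝ) * (L:ℝ) ^ (1-2*k) := by rw [Real.rpow_one]
      _ = (L:ℝ) ^ (1 + (1-2*k)) := (Real.rpow_add hL0 _ _).symm
      _ = (L:ℝ) ^ (2-2*k) := by ring_nf
  have hLs : (L:ℝ) * Real.sqrt (epsSum L upar) ≤ 1/10 := by
    have h1 : (L:ℝ) * upar ≤ 2 * ((L:ℝ) * Real.exp (-(2*J))) := by
      have := mul_le_mul_of_nonneg_left hupar2E2 hL0.le
      have e1 : (L:ℝ) * (2 * Real.exp (-(2*J))) = 2 * ((L:ℝ) * Real.exp (-(2*J))) := by ring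
      linarith
    have h2 : (L:ℝ) * Real.sqrt (epsSum L upar) ≤ (L:ℝ) * (2 * ((L:ℝ) * upar)) :=
      mul_le_mul_of_nonneg_left hsv2 hL0.le
    have h3 : (L:ℝ) * (2 * ((L:ℝ) * upar)) ≤ 4 * ((L:ℝ) * ((L:ℝ) * Real.exp (-(2*J)))) := by
      have := mul_le_mul_of_nonneg_left h1 hL0.le
      have e1 : (L:ℝ) * (2 * ((L:ℝ) * upar)) = 2 * ((L:ℝ) * ((L:ℝ) * upar)) := by ring
      have e2 : (L:ℝ) * (2 * ((L:ℝ) * Real.exp (-(2*J))))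
          = 2 * ((L:ℝ) * ((L:ℝ) * Real.exp (-(2*J)))) := by ring
      linarith
    have h4 : 4 * ((L:ℝ) * ((L:ℝ) * Real.exp (-(2*J)))) ≤ 4 * (L:ℝ) ^ (2-2*k) :=
      mul_le_mul_of_nonneg_left hLL2 (by norm_num)
    have h5 := mul_le_mul_of_nonneg_left h2c (by norm_num : (0:ℝ) ≤ 4)
    linarith
  -- the per-configuration identity
  have hhkey : ∀ τ : Cfg L, Real.exp (-(2*J) * (contourLen L τ : ℝ)) * gDens L J q τ
      = vpar ^ (nUR L τ) * upar ^ (contourLen L τ - 2 * nUR L τ) := by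
    intro τ
    rw [gDens_eq, ← hA, ← hB]
    have h2n := two_nUR_le_contour (σ := τ)
    obtain ⟨m, hm⟩ : ∃ m, contourLen L τ = 2 * nUR L τ + m := ⟨contourLen L τ - 2 * nUR L τ, by omega⟩
    rw [hm]
    have hsub : 2 * nUR L τ + m - 2 * nUR L τ = m := by omega
    rw [hsub]
    have hexp : Real.exp (-(2*J) * ((2 * nUR L τ + m : ℕ) : ℝ))
        = Real.exp (-(2*J)) ^ (2 * nUR L τ + m) := by
      rw [show (-(2*J) * ((2 * nUR L τ + m : ℕ) : ℝ))
          = ((2 * nUR L τ + m : ℕ) : ℝ) * (-(2*J)) by ring]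
      exact Real.exp_nat_mul _ _
    rw [hexp, pow_add, pow_mul, hv, hu, mul_pow, mul_pow]
    ring
  -- sum bound
  have hsum1 : (∑ τ : Cfg L, Real.exp (-(2*J) * (contourLen L τ : ℝ)) * gDens L J q τ)
      = ∑ f : ZMod L → ZMod L → Bool, ∏ d : ZMod L, S10.Tw vpar upar (f d) (f (d + 1)) := by
    rw [Finset.sum_congr rfl fun τ _ => hhkey τ]
    exact S10.sum_weight_eq vpar upar
  have hS2 := S10.Slayers_le h2L hv0 hv1 hu0 hu1 hLu
  have hSfinal : (∑ τ : Cfg L, Real.exp (-(2*J) * (contourLen L τ : ℝ)) * gDens L J q τ) ≤ 7 := by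
    rw [hsum1]
    set sv := Real.sqrt (epsSum L upar) with hsv
    have hy0 : (0:ℝ) ≤ vpar ^ L + sv := by positivity
    have hyL : (L:ℝ) * (vpar ^ L + sv) ≤ 1/5 := by
      rw [mul_add]
      linarith
    have hpow : (1 + vpar ^ L + sv) ^ (L-1) ≤ Real.exp 1 := by
      calc (1 + vpar ^ L + sv) ^ (L-1) ≤ Real.exp (vpar ^ L + sv) ^ (L-1) := by
            apply pow_le_pow_left₀ (by positivity)
            have := Real.add_one_le_exp (vpar ^ L + sv)
            linarith
        _ = Real.exp (((L-1 : ℕ) : ℝ) * (vpar ^ L + sv)) := (Real.exp_nat_mul _ _).symm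
        _ ≤ Real.exp 1 := by
            apply Real.exp_le_exp.mpr
            have h1 : ((L-1 : ℕ) : ℝ) ≤ (L:ℝ) := by
              exact_mod_cast Nat.sub_le L 1
            have h2 : ((L-1 : ℕ) : ℝ) * (vpar ^ L + sv) ≤ (L:ℝ) * (vpar ^ L + sv) :=
              mul_le_mul_of_nonneg_right h1 hy0
            linarith
    have h6 := Real.exp_one_lt_d9
    calc (∑ f : ZMod L → ZMod L → Bool, ∏ d : ZMod L, S10.Tw vpar upar (f d) (f (d + 1)))
        ≤ (5/2) * (1 + vpar ^ L + sv) ^ (L-1) := hS2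
      _ ≤ (5/2) * Real.exp 1 := by
          apply mul_le_mul_of_nonneg_left hpow (by norm_num)
      _ ≤ 7 := by linarith
  -- bounding pi_G(g)
  have hSnonneg : (0:ℝ) ≤ ∑ τ : Cfg L, Real.exp (-(2*J) * (contourLen L τ : ℝ)) * gDens L J q τ :=
    Finset.sum_nonneg fun τ _ => mul_nonneg (Real.exp_pos _).le (gDens_pos J q τ).le
  have hpi : (∑ τ : Cfg L, piG L J τ * gDens L J q τ) ≤ 7/2 := by
    have hC : (0:ℝ) < Real.exp (2 * J * (Fintype.card (Site L) : ℝ)) := Real.exp_pos _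
    have hZg : 2 * Real.exp (2 * J * (Fintype.card (Site L) : ℝ)) ≤ Zg L J := S10.Zg_ge J
    have hZg0 : (0:ℝ) < Zg L J := lt_of_lt_of_le (by positivity) hZg
    have hrw : (∑ τ : Cfg L, piG L J τ * gDens L J q τ)
        = (Real.exp (2 * J * (Fintype.card (Site L) : ℝ))
            * ∑ τ : Cfg L, Real.exp (-(2*J) * (contourLen L τ : ℝ)) * gDens L J q τ) / Zg L J := by
      rw [Finset.mul_sum, Finset.sum_div]
      refine Finset.sum_congr rfl fun τ _ => ?_
      rw [piG, S10.exp_isingH J τ]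
      ring
    rw [hrw]
    set C := Real.exp (2 * J * (Fintype.card (Site L) : ℝ)) with hCdef
    set SS := ∑ τ : Cfg L, Real.exp (-(2*J) * (contourLen L τ : ℝ)) * gDens L J q τ with hSS
    have h1 : (C * SS) / Zg L J ≤ (C * SS) / (2 * C) := by
      apply div_le_div_of_nonneg_left (mul_nonneg hC.le hSnonneg) (by positivity) hZg
    have h2 : (C * SS) / (2 * C) = SS / 2 := by
      field_simp
    calc (C * SS) / Zg L J ≤ (C * SS) / (2 * C) := h1
      _ = SS / 2 := h2
      _ ≤ 7/2 := by linarith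
  -- lower bounds on g for nonconstant configurations
  have hglow : ∀ σ : Cfg L, σ ≠ plusCfg L → σ ≠ minusCfg L →
      ((7/2 : ℝ) < gDens L J q σ ∧
        (nUR L σ = 0 → ((5:ℝ)/4) ^ L ≤ gDens L J q σ)) := by
    intro σ hp hm
    rw [gDens_eq, ← hA, ← hB]
    by_cases hn : nUR L σ = 0
    · rw [hn]
      simp only [pow_zero, one_mul, Nat.mul_zero, Nat.sub_zero]
      have hlL : L ≤ contourLen L σ := S10.contour_ge_L hp hm hn
      have hBl : ((5:ℝ)/4) ^ L ≤ B ^ (contourLen L σ) := by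
        calc ((5:ℝ)/4) ^ L ≤ B ^ L := pow_le_pow_left₀ (by norm_num) hB54 L
          _ ≤ B ^ (contourLen L σ) := pow_le_pow_right₀ hB1 hlL
      constructor
      · have h54 : ((5:ℝ)/4) ^ 7 ≤ ((5:ℝ)/4) ^ L := pow_le_pow_right₀ (by norm_num) h7
        have : (7/2 : ℝ) < ((5:ℝ)/4) ^ 7 := by norm_num
        linarith
      · intro _
        exact hBl
    · constructor
      · have hn1 : 1 ≤ nUR L σ := by omega
        have h1 : A ≤ A ^ (nUR L σ) := le_self_pow₀ hA1 (by omega)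
        have h2 : (1:ℝ) ≤ B ^ (contourLen L σ - 2 * nUR L σ) := one_le_pow₀ hB1
        have h3 : A ^ (nUR L σ) * 1 ≤ A ^ (nUR L σ) * B ^ (contourLen L σ - 2 * nUR L σ) := by
          apply mul_le_mul_of_nonneg_left h2 (by positivity)
        rw [mul_one] at h3
        linarith
      · intro h0
        exact absurd h0 hn
  refine ⟨⟨S10.gDens_plus J q, S10.gDens_minus J q⟩, ?_, ?_⟩
  · intro σ hp hm
    exact lt_of_le_of_lt hpi (hglow σ hp hm).1
  · intro σ hp hm h0
    exact (hglow σ hp hm).2 h0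
end
end

section
/- For every L ≥ 2, all J, q > 0, every starting configuration σ ∈ S, and every N ≥ 0, the tail of the hitting time of the all-plus configuration is maximal from the all-minus configuration: ∑_{τ ≠ 1} Q^N(σ, τ) ≤ ∑_{τ ≠ 1} Q^N(−1, τ), where Q is the substochastic matrix on S∖{1} obtained by restricting P. -/
open Real Filter MeasureTheory

noncomputable section

/-- The substochastic matrix `Q` on `S∖{1}` obtained by restricting `P`. -/
def Qmat (L : ℕ) [NeZero L] (J q : ℝ) :
    Matrix {σ : Cfg L // σ ≠ plusCfg L} {σ : Cfg L // σ ≠ plusCfg L} ℝ :=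
  Matrix.of fun σ τ => Ptrans L J q σ.1 τ.1

theorem minus_ne_plus (L : ℕ) [NeZero L] : minusCfg L ≠ plusCfg L :=
  fun h => Bool.false_ne_true (congrFun h (0, 0))

-- ====== auxiliary development ======
namespace Stmt12Aux

lemma spin_mono {b b' : Bool} (h : b ≤ b') : spin b ≤ spin b' := by
  cases b
  · cases b' <;> simp [spin] <;> norm_num
  · cases b'
    · exact absurd h (by decide)
    · exact le_refl _

/-- The local field at site `x` determined by the previous configuration `σ`. -/
def aCoef (L : ℕ) [NeZero L] (J q : ℝ) (σ : Cfg L) (x : Site L) : ℝ :=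
  J * (spin (σ (dnN x)) + spin (σ (lfN x))) + q * spin (σ x)

def eUp (L : ℕ) [NeZero L] : Site L ≃ Site L where
  toFun := upN
  invFun := dnN
  left_inv := fun x => by simp [upN, dnN]
  right_inv := fun x => by simp [upN, dnN]

def eRt (L : ℕ) [NeZero L] : Site L ≃ Site L where
  toFun := rtN
  invFun := lfN
  left_inv := fun x => by simp [rtN, lfN]
  right_inv := fun x => by simp [rtN, lfN]

lemma neg_pairH (L : ℕ) [NeZero L] (J q : ℝ) (σ τ : Cfg L) :
    -(pairH L J q σ τ) = ∑ x : Site L, aCoef L J q σ x * spin (τ x) := by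
  unfold pairH aCoef
  rw [neg_neg]
  have h1 : ∑ x : Site L, J * spin (σ x) * spin (τ (upN x))
      = ∑ x : Site L, J * spin (σ (dnN x)) * spin (τ x) := by
    rw [← Equiv.sum_comp (eUp L) (fun x => J * spin (σ (dnN x)) * spin (τ x))]
    refine Finset.sum_congr rfl fun x _ => ?_
    simp [eUp, upN, dnN]
  have h2 : ∑ x : Site L, J * spin (σ x) * spin (τ (rtN x))
      = ∑ x : Site L, J * spin (σ (lfN x)) * spin (τ x) := by
    rw [← Equiv.sum_comp (eRt L) (fun x => J * spin (σ (lfN x)) * spin (τ x))]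
    refine Finset.sum_congr rfl fun x _ => ?_
    simp [eRt, rtN, lfN]
  have e1 : ∑ x : Site L, (J * spin (σ x) * (spin (τ (upN x)) + spin (τ (rtN x)))
        + q * spin (σ x) * spin (τ x))
      = (∑ x : Site L, J * spin (σ x) * spin (τ (upN x)))
        + (∑ x : Site L, J * spin (σ x) * spin (τ (rtN x)))
        + ∑ x : Site L, q * spin (σ x) * spin (τ x) := by
    rw [← Finset.sum_add_distrib, ← Finset.sum_add_distrib]
    exact Finset.sum_congr rfl fun x _ => by ring
  have e2 : ∑ x : Site L, (J * (spin (σ (dnN x)) + spin (σ (lfN x))) + q * spin (σ x)) * spin (τ x)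
      = (∑ x : Site L, J * spin (σ (dnN x)) * spin (τ x))
        + (∑ x : Site L, J * spin (σ (lfN x)) * spin (τ x))
        + ∑ x : Site L, q * spin (σ x) * spin (τ x) := by
    rw [← Finset.sum_add_distrib, ← Finset.sum_add_distrib]
    exact Finset.sum_congr rfl fun x _ => by ring
  rw [e1, e2, h1, h2]

/-- Probability of `+` for local field `aa`. -/
def pfun (aa : ℝ) : ℝ := Real.exp aa / (Real.exp aa + Real.exp (-aa))

/-- One-site weight. -/
def wfun (aa : ℝ) (b : Bool) : ℝ :=
  Real.exp (aa * spin b) / (Real.exp aa + Real.exp (-aa))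

lemma wfun_true (aa : ℝ) : wfun aa true = pfun aa := by
  simp [wfun, pfun, spin]

lemma wfun_false (aa : ℝ) : wfun aa false = 1 - pfun aa := by
  have hD : Real.exp aa + Real.exp (-aa) ≠ 0 := by positivity
  simp only [wfun, pfun, spin, Bool.false_eq_true, if_false, mul_neg_one]
  field_simp
  ring

lemma wfun_eq (aa : ℝ) (b : Bool) :
    wfun aa b = if b then pfun aa else 1 - pfun aa := by
  cases b
  · simp [wfun_false]
  · simp [wfun_true]

/-- The monotone coupling of two Bernoulli laws with parameters `p ≤ p'`. -/
def kker (p p' : ℝ) (t t' : Bool) : ℝ :=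
  if t then (if t' then p else 0) else (if t' then p' - p else 1 - p')

lemma kker_nonneg {p p' : ℝ} (h0 : 0 ≤ p) (h1 : p ≤ p') (h2 : p' ≤ 1) (t t' : Bool) :
    0 ≤ kker p p' t t' := by
  cases t <;> cases t' <;> simp [kker] <;> linarith

lemma kker_supp {p p' : ℝ} {t t' : Bool} (h : kker p p' t t' ≠ 0) : t ≤ t' := by
  cases t
  · exact Bool.false_le _
  · cases t'
    · exact absurd (by simp [kker]) h
    · exact le_refl _

lemma kker_marg1 (p p' : ℝ) (t : Bool) :
    ∑ t' : Bool, kker p p' t t' = if t then p else 1 - p := by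
  rw [Fintype.sum_bool]
  cases t <;> simp [kker] <;> ring

lemma kker_marg2 (p p' : ℝ) (t' : Bool) :
    ∑ t : Bool, kker p p' t t' = if t' then p' else 1 - p' := by
  rw [Fintype.sum_bool]
  cases t' <;> simp [kker] <;> ring

lemma pfun_nonneg (aa : ℝ) : 0 ≤ pfun aa := by
  unfold pfun; positivity

lemma pfun_le_one (aa : ℝ) : pfun aa ≤ 1 := by
  unfold pfun
  rw [div_le_one (by positivity)]
  nlinarith [Real.exp_pos (-aa)]

lemma pfun_mono {aa bb : ℝ} (h : aa ≤ bb) : pfun aa ≤ pfun bb := by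
  unfold pfun
  rw [div_le_div_iff₀ (by positivity) (by positivity)]
  have h1 : Real.exp (aa + -bb) ≤ Real.exp (bb + -aa) := Real.exp_le_exp.mpr (by linarith)
  rw [Real.exp_add, Real.exp_add] at h1
  nlinarith [Real.exp_pos aa, Real.exp_pos bb]

lemma aCoef_mono (L : ℕ) [NeZero L] {J q : ℝ} (hJ : 0 ≤ J) (hq : 0 ≤ q)
    {σ σ' : Cfg L} (h : σ ≤ σ') (x : Site L) :
    aCoef L J q σ x ≤ aCoef L J q σ' x := by
  unfold aCoef
  exact add_le_add
    (mul_le_mul_of_nonneg_left (add_le_add (spin_mono (h _)) (spin_mono (h _))) hJ)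
    (mul_le_mul_of_nonneg_left (spin_mono (h _)) hq)

lemma Ptrans_eq_prod (L : ℕ) [NeZero L] (J q : ℝ) (σ ρ : Cfg L) :
    Ptrans L J q σ ρ = ∏ x : Site L, wfun (aCoef L J q σ x) (ρ x) := by
  have hnum : ∀ τ : Cfg L, Real.exp (-(pairH L J q σ τ))
      = ∏ x : Site L, Real.exp (aCoef L J q σ x * spin (τ x)) := by
    intro τ
    rw [neg_pairH, Real.exp_sum]
  have hZ : Zconf L J q σ
      = ∏ x : Site L, (Real.exp (aCoef L J q σ x) + Real.exp (-(aCoef L J q σ x))) := by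
    unfold Zconf
    simp_rw [hnum]
    rw [show (∏ x : Site L, (Real.exp (aCoef L J q σ x) + Real.exp (-(aCoef L J q σ x))))
        = ∏ x : Site L, ∑ b : Bool, Real.exp (aCoef L J q σ x * spin b) from
      Finset.prod_congr rfl fun x _ => by
        rw [Fintype.sum_bool]; simp [spin, mul_neg_one]]
    rw [Finset.prod_univ_sum (fun _ => (Finset.univ : Finset Bool))
      (fun x b => Real.exp (aCoef L J q σ x * spin b)), Fintype.piFinset_univ]
  unfold Ptrans
  rw [hnum, hZ, ← Finset.prod_div_distrib]
  rfl

lemma Zconf_pos (L : ℕ) [NeZero L] (J q : ℝ) (σ : Cfg L) : 0 < Zconf L J q σ :=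
  Finset.sum_pos (fun _ _ => Real.exp_pos _) Finset.univ_nonempty

lemma Ptrans_nonneg (L : ℕ) [NeZero L] (J q : ℝ) (σ τ : Cfg L) : 0 ≤ Ptrans L J q σ τ :=
  div_nonneg (Real.exp_pos _).le (Zconf_pos L J q σ).le

lemma sum_Ptrans (L : ℕ) [NeZero L] (J q : ℝ) (σ : Cfg L) :
    ∑ τ : Cfg L, Ptrans L J q σ τ = 1 := by
  unfold Ptrans
  rw [← Finset.sum_div]
  exact div_self (Zconf_pos L J q σ).ne'

/-- Stochastic monotonicity of one PCA step, via an explicit sitewise monotone coupling. -/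
lemma step_mono (L : ℕ) [NeZero L] {J q : ℝ} (hJ : 0 ≤ J) (hq : 0 ≤ q)
    {σ σ' : Cfg L} (hσ : σ ≤ σ') {h : Cfg L → ℝ}
    (hh : ∀ τ τ' : Cfg L, τ ≤ τ' → h τ' ≤ h τ) :
    ∑ ρ : Cfg L, Ptrans L J q σ' ρ * h ρ ≤ ∑ ρ : Cfg L, Ptrans L J q σ ρ * h ρ := by
  set k : Site L → Bool → Bool → ℝ := fun x =>
    kker (pfun (aCoef L J q σ x)) (pfun (aCoef L J q σ' x)) with hk
  have k_nonneg : ∀ x t t', 0 ≤ k x t t' := fun x t t' =>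
    kker_nonneg (pfun_nonneg _) (pfun_mono (aCoef_mono L hJ hq hσ x)) (pfun_le_one _) t t'
  have k_supp : ∀ x t t', k x t t' ≠ 0 → t ≤ t' := fun x t t' h => kker_supp h
  have marg1 : ∀ x t, ∑ t' : Bool, k x t t' = wfun (aCoef L J q σ x) t := by
    intro x t
    rw [hk, kker_marg1, wfun_eq]
  have marg2 : ∀ x t', ∑ t : Bool, k x t t' = wfun (aCoef L J q σ' x) t' := by
    intro x t'
    rw [hk, kker_marg2, wfun_eq]
  -- the coupling measure
  have hnu1 : ∀ ρ : Cfg L, ∑ ρ' : Cfg L, ∏ x : Site L, k x (ρ x) (ρ' x)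
      = Ptrans L J q σ ρ := by
    intro ρ
    rw [Ptrans_eq_prod]
    rw [show (∏ x : Site L, wfun (aCoef L J q σ x) (ρ x))
        = ∏ x : Site L, ∑ t' : Bool, k x (ρ x) t' from
      Finset.prod_congr rfl fun x _ => (marg1 x (ρ x)).symm]
    rw [Finset.prod_univ_sum (fun _ => (Finset.univ : Finset Bool))
      (fun x t' => k x (ρ x) t'), Fintype.piFinset_univ]
  have hnu2 : ∀ ρ' : Cfg L, ∑ ρ : Cfg L, ∏ x : Site L, k x (ρ x) (ρ' x)
      = Ptrans L J q σ' ρ' := by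
    intro ρ'
    rw [Ptrans_eq_prod]
    rw [show (∏ x : Site L, wfun (aCoef L J q σ' x) (ρ' x))
        = ∏ x : Site L, ∑ t : Bool, k x t (ρ' x) from
      Finset.prod_congr rfl fun x _ => (marg2 x (ρ' x)).symm]
    rw [Finset.prod_univ_sum (fun _ => (Finset.univ : Finset Bool))
      (fun x t => k x t (ρ' x)), Fintype.piFinset_univ]
  calc ∑ ρ' : Cfg L, Ptrans L J q σ' ρ' * h ρ'
      = ∑ ρ' : Cfg L, (∑ ρ : Cfg L, ∏ x : Site L, k x (ρ x) (ρ' x)) * h ρ' := by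
        exact Finset.sum_congr rfl fun ρ' _ => by rw [hnu2]
    _ = ∑ ρ' : Cfg L, ∑ ρ : Cfg L, (∏ x : Site L, k x (ρ x) (ρ' x)) * h ρ' := by
        exact Finset.sum_congr rfl fun ρ' _ => Finset.sum_mul _ _ _
    _ ≤ ∑ ρ' : Cfg L, ∑ ρ : Cfg L, (∏ x : Site L, k x (ρ x) (ρ' x)) * h ρ := by
        refine Finset.sum_le_sum fun ρ' _ => Finset.sum_le_sum fun ρ _ => ?_
        by_cases hz : (∏ x : Site L, k x (ρ x) (ρ' x)) = 0
        · rw [hz]; simp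
        · have hρle : ρ ≤ ρ' := fun x =>
            k_supp x (ρ x) (ρ' x) (Finset.prod_ne_zero_iff.mp hz x (Finset.mem_univ x))
          exact mul_le_mul_of_nonneg_left (hh ρ ρ' hρle)
            (Finset.prod_nonneg fun x _ => k_nonneg x (ρ x) (ρ' x))
    _ = ∑ ρ : Cfg L, ∑ ρ' : Cfg L, (∏ x : Site L, k x (ρ x) (ρ' x)) * h ρ :=
        Finset.sum_comm
    _ = ∑ ρ : Cfg L, Ptrans L J q σ ρ * h ρ := by
        refine Finset.sum_congr rfl fun ρ _ => ?_
        rw [← Finset.sum_mul, hnu1]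

/-- The tail function, extended by `0` at the all-plus configuration. -/
def hfun (L : ℕ) [NeZero L] (J q : ℝ) (N : ℕ) (τ : Cfg L) : ℝ :=
  if hτ : τ = plusCfg L then 0
  else ∑ τ' : {σ : Cfg L // σ ≠ plusCfg L}, (Qmat L J q ^ N) ⟨τ, hτ⟩ τ'

lemma plus_of_plus_le {L : ℕ} {τ : Cfg L} (h : plusCfg L ≤ τ) : τ = plusCfg L := by
  funext x
  have hx := h x
  cases hbx : τ x
  · exact absurd (hbx ▸ hx) (by simp [plusCfg])
  · simp [plusCfg]

lemma hfun_zero (L : ℕ) [NeZero L] (J q : ℝ) (τ : Cfg L) :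
    hfun L J q 0 τ = if τ = plusCfg L then 0 else 1 := by
  unfold hfun
  by_cases hτ : τ = plusCfg L
  · simp [hτ]
  · simp only [dif_neg hτ, if_neg hτ, pow_zero]
    simp [Matrix.one_apply]

lemma hfun_succ (L : ℕ) [NeZero L] (J q : ℝ) (N : ℕ) {τ : Cfg L} (hτ : τ ≠ plusCfg L) :
    hfun L J q (N + 1) τ = ∑ ρ : Cfg L, Ptrans L J q τ ρ * hfun L J q N ρ := by
  have hsub : ∀ f : Cfg L → ℝ, f (plusCfg L) = 0 →
      ∑ ρ : Cfg L, f ρ = ∑ ρ : {σ : Cfg L // σ ≠ plusCfg L}, f ρ.1 := by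
    intro f hf
    rw [← Finset.sum_subtype (Finset.univ.filter (· ≠ plusCfg L))
      (fun x => by simp) f]
    rw [← Finset.sum_filter_add_sum_filter_not Finset.univ (· ≠ plusCfg L) f]
    have : Finset.univ.filter (fun x => ¬ x ≠ plusCfg L) = {plusCfg L} := by
      ext x; simp
    rw [this]
    simp [hf]
  rw [hsub _ (by simp [hfun])]
  unfold hfun
  rw [dif_neg hτ]
  rw [show (Qmat L J q) ^ (N + 1) = Qmat L J q * (Qmat L J q) ^ N from pow_succ' _ _]
  simp_rw [Matrix.mul_apply]
  rw [Finset.sum_comm]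
  refine Finset.sum_congr rfl fun ρ _ => ?_
  rw [dif_neg ρ.2, ← Finset.mul_sum]
  rfl

lemma hfun_props (L : ℕ) [NeZero L] {J q : ℝ} (hJ : 0 ≤ J) (hq : 0 ≤ q) (N : ℕ) :
    (∀ τ : Cfg L, 0 ≤ hfun L J q N τ ∧ hfun L J q N τ ≤ 1) ∧
    (∀ τ τ' : Cfg L, τ ≤ τ' → hfun L J q N τ' ≤ hfun L J q N τ) := by
  induction N with
  | zero =>
    constructor
    · intro τ; rw [hfun_zero]; split <;> norm_num
    · intro τ τ' hle
      rw [hfun_zero, hfun_zero]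
      by_cases hτ' : τ' = plusCfg L
      · simp only [if_pos hτ']; split <;> norm_num
      · have hτ : τ ≠ plusCfg L := fun hc => hτ' (plus_of_plus_le (hc ▸ hle))
        rw [if_neg hτ, if_neg hτ']
  | succ N ih =>
    obtain ⟨ihb, ihm⟩ := ih
    have hbounds : ∀ τ : Cfg L, 0 ≤ hfun L J q (N + 1) τ ∧ hfun L J q (N + 1) τ ≤ 1 := by
      intro τ
      by_cases hτ : τ = plusCfg L
      · unfold hfun; rw [dif_pos hτ]; norm_num
      · rw [hfun_succ L J q N hτ]
        constructor
        · exact Finset.sum_nonneg fun ρ _ =>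
            mul_nonneg (Ptrans_nonneg L J q τ ρ) (ihb ρ).1
        · calc ∑ ρ : Cfg L, Ptrans L J q τ ρ * hfun L J q N ρ
              ≤ ∑ ρ : Cfg L, Ptrans L J q τ ρ * 1 :=
              Finset.sum_le_sum fun ρ _ =>
                mul_le_mul_of_nonneg_left (ihb ρ).2 (Ptrans_nonneg L J q τ ρ)
            _ = 1 := by simp [sum_Ptrans]
    refine ⟨hbounds, fun τ τ' hle => ?_⟩
    by_cases hτ' : τ' = plusCfg L
    · have : hfun L J q (N + 1) τ' = 0 := by unfold hfun; rw [dif_pos hτ']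
      rw [this]; exact (hbounds τ).1
    · have hτ : τ ≠ plusCfg L := fun hc => hτ' (plus_of_plus_le (hc ▸ hle))
      rw [hfun_succ L J q N hτ, hfun_succ L J q N hτ']
      exact step_mono L hJ hq hle ihm

end Stmt12Aux

open Stmt12Aux

/-- For every `L ≥ 2`, `J, q > 0`, every starting configuration
`σ ∈ S∖{1}` and every `N ≥ 0`, the tail of the hitting time of the all-plus
configuration is maximal from the all-minus configuration:
`∑_{τ≠1} Q^N(σ,τ) ≤ ∑_{τ≠1} Q^N(−1,τ)`. -/
theorem stmt12 (L : ℕ) [NeZero L] (hL : 2 ≤ L) (J q : ℝ) (hJ : 0 < J) (hq : 0 < q)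
    (N : ℕ) (σ : {σ : Cfg L // σ ≠ plusCfg L}) :
    ∑ τ : {σ : Cfg L // σ ≠ plusCfg L}, (Qmat L J q ^ N) σ τ
      ≤ ∑ τ : {σ : Cfg L // σ ≠ plusCfg L},
          (Qmat L J q ^ N) ⟨minusCfg L, minus_ne_plus L⟩ τ := by
  have h1 : ∑ τ : {σ : Cfg L // σ ≠ plusCfg L}, (Qmat L J q ^ N) σ τ
      = hfun L J q N σ.1 := by
    unfold hfun; rw [dif_neg σ.2]
  have h2 : ∑ τ : {σ : Cfg L // σ ≠ plusCfg L},
      (Qmat L J q ^ N) ⟨minusCfg L, minus_ne_plus L⟩ τ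
      = hfun L J q N (minusCfg L) := by
    unfold hfun; rw [dif_neg (minus_ne_plus L)]
  rw [h1, h2]
  exact (hfun_props L hJ.le hq.le N).2 (minusCfg L) σ.1 (fun x => Bool.false_le _)
end
end

section
/- For every L ≥ 2, all J, q > 0, and every n ≥ 0, the distance to stationarity of the PCA is bounded by the tail of the hitting time of the all-plus configuration started from the all-minus configuration: sup_{σ∈S} ‖P^n(σ,·) − π_PCA‖_TV ≤ ∑_{τ ≠ 1} Q^n(−1, τ). -/
open Real Filter MeasureTheory

noncomputable section

/-- The PCA transition matrix. -/
def Pmat (L : ℕ) [NeZero L] (J q : ℝ) : Matrix (Cfg L) (Cfg L) ℝ :=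
  Matrix.of fun σ τ => Ptrans L J q σ τ

namespace Stmt13Aux
set_option linter.unusedSectionVars false
set_option linter.deprecated false

variable {L : ℕ} [NeZero L]

@[simp] lemma dn_up (x : Site L) : dnN (upN x) = x := by
  simp [upN, dnN]
@[simp] lemma up_dn (x : Site L) : upN (dnN x) = x := by
  simp [upN, dnN]
@[simp] lemma lf_rt (x : Site L) : lfN (rtN x) = x := by
  simp [rtN, lfN]
@[simp] lemma rt_lf (x : Site L) : rtN (lfN x) = x := by
  simp [rtN, lfN]

def eUp : Site L ≃ Site L := ⟨upN, dnN, dn_up, up_dn⟩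
def eRt : Site L ≃ Site L := ⟨rtN, lfN, lf_rt, rt_lf⟩
def eUR : Site L ≃ Site L :=
  ⟨fun x => upN (rtN x), fun x => dnN (lfN x),
   fun x => by simp [upN, dnN, rtN, lfN], fun x => by simp [upN, dnN, rtN, lfN]⟩

lemma spin_mem (b : Bool) : spin b = 1 ∨ spin b = -1 := by
  cases b <;> simp [spin]

/-- local field -/
def hf (J q : ℝ) (σ : Cfg L) (y : Site L) : ℝ :=
  J * (spin (σ (dnN y)) + spin (σ (lfN y))) + q * spin (σ y)

lemma negH_eq (J q : ℝ) (σ τ : Cfg L) :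
    -(pairH L J q σ τ) = ∑ y : Site L, hf J q σ y * spin (τ y) := by
  have h1 : ∑ x : Site L, J * spin (σ x) * spin (τ (upN x))
      = ∑ y : Site L, J * spin (σ (dnN y)) * spin (τ y) := by
    apply Fintype.sum_equiv eUp
    intro x
    simp [eUp]
  have h2 : ∑ x : Site L, J * spin (σ x) * spin (τ (rtN x))
      = ∑ y : Site L, J * spin (σ (lfN y)) * spin (τ y) := by
    apply Fintype.sum_equiv eRt
    intro x
    simp [eRt]
  have expand : -(pairH L J q σ τ) =
      (∑ x : Site L, J * spin (σ x) * spin (τ (upN x)))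
      + ((∑ x : Site L, J * spin (σ x) * spin (τ (rtN x)))
      + (∑ x : Site L, q * spin (σ x) * spin (τ x))) := by
    rw [pairH, neg_neg, ← Finset.sum_add_distrib, ← Finset.sum_add_distrib]
    apply Finset.sum_congr rfl
    intro x _
    ring
  rw [expand, h1, h2, ← Finset.sum_add_distrib, ← Finset.sum_add_distrib]
  apply Finset.sum_congr rfl
  intro y _
  rw [hf]; ring

lemma exp_negH (J q : ℝ) (σ τ : Cfg L) :
    Real.exp (-(pairH L J q σ τ)) = ∏ y : Site L, Real.exp (hf J q σ y * spin (τ y)) := by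
  rw [negH_eq, Real.exp_sum]

lemma Zconf_prod (J q : ℝ) (σ : Cfg L) :
    Zconf L J q σ = ∏ y : Site L, (Real.exp (hf J q σ y) + Real.exp (-(hf J q σ y))) := by
  have : Zconf L J q σ = ∑ τ : Cfg L, ∏ y : Site L, Real.exp (hf J q σ y * spin (τ y)) := by
    rw [Zconf]; exact Finset.sum_congr rfl fun τ _ => exp_negH J q σ τ
  have key := Finset.prod_univ_sum (fun _ : Site L => (Finset.univ : Finset Bool))
    (fun y b => Real.exp (hf J q σ y * spin b))
  rw [Fintype.piFinset_univ] at key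
  rw [this, ← key]
  apply Finset.prod_congr rfl
  intro y _
  rw [Fintype.sum_bool]
  simp [spin]

lemma Zconf_pos (J q : ℝ) (σ : Cfg L) : 0 < Zconf L J q σ := by
  rw [Zconf]
  exact Finset.sum_pos (fun τ _ => Real.exp_pos _) Finset.univ_nonempty

/-- success probability at a site -/
def pp (J q : ℝ) (σ : Cfg L) (y : Site L) : ℝ :=
  Real.exp (hf J q σ y) / (Real.exp (hf J q σ y) + Real.exp (-(hf J q σ y)))

lemma denom_pos (t : ℝ) : 0 < Real.exp t + Real.exp (-t) :=
  add_pos (Real.exp_pos _) (Real.exp_pos _)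

lemma pp_pos (J q : ℝ) (σ : Cfg L) (y : Site L) : 0 < pp J q σ y :=
  div_pos (Real.exp_pos _) (denom_pos _)

lemma pp_lt_one (J q : ℝ) (σ : Cfg L) (y : Site L) : pp J q σ y < 1 := by
  rw [pp, div_lt_one (denom_pos _)]
  nlinarith [Real.exp_pos (-(hf J q σ y))]

/-- per-site weight -/
def wgt (J q : ℝ) (σ : Cfg L) (y : Site L) (b : Bool) : ℝ :=
  if b then pp J q σ y else 1 - pp J q σ y

lemma wgt_nonneg (J q : ℝ) (σ : Cfg L) (y : Site L) (b : Bool) : 0 ≤ wgt J q σ y b := by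
  cases b <;> simp [wgt] <;>
    [linarith [pp_lt_one J q σ y]; linarith [pp_pos J q σ y]]

lemma Ptrans_prod (J q : ℝ) (σ τ : Cfg L) :
    Ptrans L J q σ τ = ∏ y : Site L, wgt J q σ y (τ y) := by
  rw [Ptrans, exp_negH, Zconf_prod, ← Finset.prod_div_distrib]
  apply Finset.prod_congr rfl
  intro y _
  have hD := denom_pos (hf J q σ y)
  cases hb : τ y
  · simp only [wgt, pp, spin, if_false, Bool.false_eq_true, mul_neg_one, mul_one]
    rw [eq_sub_iff_add_eq, ← add_div, add_comm, div_self (ne_of_gt hD)]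
  · simp [wgt, pp, spin]

lemma Ptrans_nonneg (J q : ℝ) (σ τ : Cfg L) : 0 ≤ Ptrans L J q σ τ :=
  div_nonneg (Real.exp_pos _).le (Zconf_pos J q σ).le

lemma Ptrans_rowsum (J q : ℝ) (σ : Cfg L) : ∑ τ : Cfg L, Ptrans L J q σ τ = 1 := by
  have : ∑ τ : Cfg L, Ptrans L J q σ τ = Zconf L J q σ / Zconf L J q σ := by
    rw [Zconf, Finset.sum_div]
    exact Finset.sum_congr rfl fun τ _ => rfl
  rw [this, div_self (ne_of_gt (Zconf_pos J q σ))]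

/-- partial order on configurations -/
def cle (σ σ' : Cfg L) : Prop := ∀ y, σ y = true → σ' y = true

lemma cle_refl (σ : Cfg L) : cle σ σ := fun _ h => h

lemma spin_mono {σ σ' : Cfg L} (h : cle σ σ') (y : Site L) : spin (σ y) ≤ spin (σ' y) := by
  cases hb : σ y
  · rcases spin_mem (σ' y) with h' | h' <;> rw [h'] <;> simp [spin]
  · rw [h y hb]

lemma hf_mono {J q : ℝ} (hJ : 0 < J) (hq : 0 < q) {σ σ' : Cfg L} (h : cle σ σ') (y : Site L) :
    hf J q σ y ≤ hf J q σ' y := by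
  have h1 := spin_mono h (dnN y)
  have h2 := spin_mono h (lfN y)
  have h3 := spin_mono h y
  rw [hf, hf]
  nlinarith

lemma pp_mono {J q : ℝ} (hJ : 0 < J) (hq : 0 < q) {σ σ' : Cfg L} (h : cle σ σ') (y : Site L) :
    pp J q σ y ≤ pp J q σ' y := by
  set a := hf J q σ y
  set b := hf J q σ' y
  have hab : a ≤ b := hf_mono hJ hq h y
  rw [pp, pp, div_le_div_iff₀ (denom_pos a) (denom_pos b)]
  have key : Real.exp (a - b) ≤ Real.exp (b - a) :=
    Real.exp_le_exp.2 (by linarith)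
  rw [Real.exp_sub, Real.exp_sub] at key
  have ha := Real.exp_pos a
  have hb' := Real.exp_pos b
  have hna := Real.exp_pos (-a)
  have hnb := Real.exp_pos (-b)
  have e1 : Real.exp a * Real.exp (-a) = 1 := by rw [← Real.exp_add]; simp
  have e2 : Real.exp b * Real.exp (-b) = 1 := by rw [← Real.exp_add]; simp
  have : Real.exp a * Real.exp (-b) ≤ Real.exp b * Real.exp (-a) := by
    rw [div_le_div_iff₀ hb' ha] at key
    nlinarith
  nlinarith

end Stmt13Aux

namespace Stmt13Aux

/-- `cc t = e^t + e^{-t} = 2 cosh t` -/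
def cc (t : ℝ) : ℝ := Real.exp t + Real.exp (-t)

lemma cc_pos (t : ℝ) : 0 < cc t := denom_pos t

lemma cc_neg (t : ℝ) : cc (-t) = cc t := by rw [cc, cc, neg_neg, add_comm]

def al (J q : ℝ) : ℝ :=
  (Real.log (cc (2*J+q)) + 2*Real.log (cc q) + Real.log (cc (2*J-q)))/4
def be (J q : ℝ) : ℝ := (Real.log (cc (2*J+q)) - Real.log (cc (2*J-q)))/4
def ga (J q : ℝ) : ℝ :=
  (Real.log (cc (2*J+q)) - 2*Real.log (cc q) + Real.log (cc (2*J-q)))/4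

lemma site_exp (J q : ℝ) (x u r : Bool) :
    cc (J*(spin u + spin r) + q*spin x)
      = Real.exp (al J q + be J q * (spin x * spin u + spin x * spin r)
          + ga J q * (spin u * spin r)) := by
  cases x <;> cases u <;> cases r <;> simp only [spin, if_true, if_false] <;> norm_num
  · rw [show al J q + be J q * 2 + ga J q
        = Real.log (cc (2*J+q)) by rw [al, be, ga]; ring, Real.exp_log (cc_pos _),
      show -(J * 2) + -q = -(2*J+q) by ring, cc_neg]
  · rw [show al J q + -ga J q
        = Real.log (cc q) by rw [al, ga]; ring, Real.exp_log (cc_pos _), cc_neg]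
  · rw [show al J q + -ga J q
        = Real.log (cc q) by rw [al, ga]; ring, Real.exp_log (cc_pos _), cc_neg]
  · rw [show al J q + -(be J q * 2) + ga J q
        = Real.log (cc (2*J-q)) by rw [al, be, ga]; ring, Real.exp_log (cc_pos _),
      show J * 2 + -q = 2*J-q by ring]
  · rw [show al J q + -(be J q * 2) + ga J q
        = Real.log (cc (2*J-q)) by rw [al, be, ga]; ring, Real.exp_log (cc_pos _),
      show -(J * 2) + q = -(2*J-q) by ring, cc_neg]
  · rw [show al J q + -ga J q
        = Real.log (cc q) by rw [al, ga]; ring, Real.exp_log (cc_pos _)]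
  · rw [show al J q + -ga J q
        = Real.log (cc q) by rw [al, ga]; ring, Real.exp_log (cc_pos _)]
  · rw [show al J q + be J q * 2 + ga J q
        = Real.log (cc (2*J+q)) by rw [al, be, ga]; ring, Real.exp_log (cc_pos _),
      show J * 2 + q = 2*J+q by ring]

variable {L : ℕ} [NeZero L]

/-- the dual local field (up/right) -/
def ggv (J q : ℝ) (τ : Cfg L) (x : Site L) : ℝ :=
  J * (spin (τ (upN x)) + spin (τ (rtN x))) + q * spin (τ x)

lemma negH_eq' (J q : ℝ) (σ τ : Cfg L) :
    -(pairH L J q σ τ) = ∑ x : Site L, ggv J q τ x * spin (σ x) := by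
  rw [pairH, neg_neg]
  apply Finset.sum_congr rfl
  intro x _
  rw [ggv]; ring

lemma sum_exp_negH (J q : ℝ) (τ : Cfg L) :
    ∑ σ : Cfg L, Real.exp (-(pairH L J q σ τ)) = ∏ x : Site L, cc (ggv J q τ x) := by
  have key := Finset.prod_univ_sum (fun _ : Site L => (Finset.univ : Finset Bool))
    (fun x b => Real.exp (ggv J q τ x * spin b))
  rw [Fintype.piFinset_univ] at key
  have : ∑ σ : Cfg L, Real.exp (-(pairH L J q σ τ))
      = ∑ σ : Cfg L, ∏ x : Site L, Real.exp (ggv J q τ x * spin (σ x)) := by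
    apply Finset.sum_congr rfl
    intro σ _
    rw [negH_eq', Real.exp_sum]
  rw [this, ← key]
  apply Finset.prod_congr rfl
  intro x _
  rw [Fintype.sum_bool, cc]
  simp [spin]

lemma prod_cc_eq (J q : ℝ) (τ : Cfg L) :
    ∏ x : Site L, cc (ggv J q τ x) = ∏ y : Site L, cc (hf J q τ y) := by
  have hg : ∀ x : Site L, cc (ggv J q τ x)
      = Real.exp (al J q + be J q * (spin (τ x) * spin (τ (upN x))
          + spin (τ x) * spin (τ (rtN x))) + ga J q * (spin (τ (upN x)) * spin (τ (rtN x)))) :=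
    fun x => site_exp J q (τ x) (τ (upN x)) (τ (rtN x))
  have hh : ∀ y : Site L, cc (hf J q τ y)
      = Real.exp (al J q + be J q * (spin (τ y) * spin (τ (dnN y))
          + spin (τ y) * spin (τ (lfN y))) + ga J q * (spin (τ (dnN y)) * spin (τ (lfN y)))) :=
    fun y => site_exp J q (τ y) (τ (dnN y)) (τ (lfN y))
  rw [Finset.prod_congr rfl fun x _ => hg x, Finset.prod_congr rfl fun y _ => hh y,
    ← Real.exp_sum, ← Real.exp_sum]
  congr 1
  have S1 : ∑ x : Site L, spin (τ x) * spin (τ (upN x))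
      = ∑ y : Site L, spin (τ y) * spin (τ (dnN y)) := by
    apply Fintype.sum_equiv eUp
    intro x
    simp only [eUp, Equiv.coe_fn_mk, dn_up]
    ring
  have S2 : ∑ x : Site L, spin (τ x) * spin (τ (rtN x))
      = ∑ y : Site L, spin (τ y) * spin (τ (lfN y)) := by
    apply Fintype.sum_equiv eRt
    intro x
    simp only [eRt, Equiv.coe_fn_mk, lf_rt]
    ring
  have S3 : ∑ x : Site L, spin (τ (upN x)) * spin (τ (rtN x))
      = ∑ y : Site L, spin (τ (dnN y)) * spin (τ (lfN y)) := by
    apply Fintype.sum_equiv eUR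
    intro x
    have e1 : dnN (upN (rtN x)) = rtN x := dn_up _
    have e2 : lfN (upN (rtN x)) = upN x := by
      simp [upN, rtN, lfN]
    simp only [eUR, Equiv.coe_fn_mk, e1, e2]
    ring
  have T : ∀ (A B C : Site L → ℝ),
      ∑ x : Site L, (al J q + be J q * (A x + B x) + ga J q * C x)
        = ((Finset.univ : Finset (Site L)).card : ℝ) * al J q + be J q * (∑ x, A x)
          + be J q * (∑ x, B x) + ga J q * (∑ x, C x) := by
    intro A B C
    have h : ∀ x : Site L, al J q + be J q * (A x + B x) + ga J q * C x
        = al J q + (be J q * A x + (be J q * B x + ga J q * C x)) := fun x => by ring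
    rw [Finset.sum_congr rfl fun x _ => h x, Finset.sum_add_distrib, Finset.sum_add_distrib,
      Finset.sum_add_distrib, ← Finset.mul_sum, ← Finset.mul_sum, ← Finset.mul_sum,
      Finset.sum_const, nsmul_eq_mul]
    ring
  have L1 := T (fun x => spin (τ x) * spin (τ (upN x))) (fun x => spin (τ x) * spin (τ (rtN x)))
    (fun x => spin (τ (upN x)) * spin (τ (rtN x)))
  have L2 := T (fun y => spin (τ y) * spin (τ (dnN y))) (fun y => spin (τ y) * spin (τ (lfN y)))
    (fun y => spin (τ (dnN y)) * spin (τ (lfN y)))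
  rw [S1, S2, S3] at L1
  linarith [L1, L2]

lemma Zpca_pos (J q : ℝ) : 0 < Zpca L J q :=
  Finset.sum_pos (fun σ _ => Zconf_pos J q σ) Finset.univ_nonempty

lemma piPCA_nonneg (J q : ℝ) (σ : Cfg L) : 0 ≤ piPCA L J q σ :=
  div_nonneg (Zconf_pos J q σ).le (Zpca_pos J q).le

lemma piPCA_sum (J q : ℝ) : ∑ σ : Cfg L, piPCA L J q σ = 1 := by
  rw [show ∑ σ : Cfg L, piPCA L J q σ = Zpca L J q / Zpca L J q by
    rw [Zpca, Finset.sum_div]; rfl]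
  exact div_self (ne_of_gt (Zpca_pos J q))

lemma stat1 (J q : ℝ) (τ : Cfg L) :
    ∑ σ : Cfg L, piPCA L J q σ * Ptrans L J q σ τ = piPCA L J q τ := by
  have key : ∀ σ : Cfg L, piPCA L J q σ * Ptrans L J q σ τ
      = Real.exp (-(pairH L J q σ τ)) / Zpca L J q := by
    intro σ
    rw [piPCA, Ptrans]
    have h1 : Zconf L J q σ ≠ 0 := (Zconf_pos J q σ).ne'
    have h2 : Zpca L J q ≠ 0 := (Zpca_pos (L := L) J q).ne'
    field_simp
  have hZ : Zconf L J q τ = ∏ y : Site L, cc (hf J q τ y) := Zconf_prod J q τ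
  rw [Finset.sum_congr rfl fun σ _ => key σ, ← Finset.sum_div, sum_exp_negH, prod_cc_eq,
    ← hZ, piPCA]

lemma statn (J q : ℝ) (n : ℕ) (τ : Cfg L) :
    ∑ ρ : Cfg L, piPCA L J q ρ * (Pmat L J q ^ n) ρ τ = piPCA L J q τ := by
  induction n generalizing τ with
  | zero =>
    simp only [pow_zero, Matrix.one_apply]
    rw [Finset.sum_congr rfl (fun ρ _ => by
      rw [mul_ite, mul_one, mul_zero] :
        ∀ ρ ∈ Finset.univ, piPCA L J q ρ * (if ρ = τ then (1:ℝ) else 0)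
          = if ρ = τ then piPCA L J q ρ else 0)]
    rw [Finset.sum_ite_eq']
    simp
  | succ n ih =>
    have expand : ∀ ρ : Cfg L, (Pmat L J q ^ (n+1)) ρ τ
        = ∑ c : Cfg L, (Pmat L J q ^ n) ρ c * Ptrans L J q c τ := by
      intro ρ
      rw [pow_succ, Matrix.mul_apply]
      rfl
    rw [Finset.sum_congr rfl fun ρ _ => by rw [expand ρ]]
    rw [Finset.sum_congr rfl fun ρ _ => Finset.mul_sum _ _ _]
    rw [Finset.sum_comm]
    have inner : ∀ c : Cfg L,
        ∑ ρ : Cfg L, piPCA L J q ρ * ((Pmat L J q ^ n) ρ c * Ptrans L J q c τ)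
          = piPCA L J q c * Ptrans L J q c τ := by
      intro c
      rw [show ∑ ρ : Cfg L, piPCA L J q ρ * ((Pmat L J q ^ n) ρ c * Ptrans L J q c τ)
          = (∑ ρ : Cfg L, piPCA L J q ρ * (Pmat L J q ^ n) ρ c) * Ptrans L J q c τ by
        rw [Finset.sum_mul]; exact Finset.sum_congr rfl fun ρ _ => by ring]
      rw [ih c]
    rw [Finset.sum_congr rfl fun c _ => inner c, stat1]

end Stmt13Aux
namespace Stmt13Aux
open MeasureTheory

def Iset (p : ℝ) (b : Bool) : Set ℝ := if b then Set.Iio p else Set.Ici p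

lemma Iset_measurable (p : ℝ) (b : Bool) : MeasurableSet (Iset p b) := by
  cases b
  · exact measurableSet_Ici
  · exact measurableSet_Iio

lemma mem_Iset_iff {p v : ℝ} {b : Bool} : v ∈ Iset p b ↔ decide (v < p) = b := by
  cases b
  · simp [Iset, not_lt]
  · simp [Iset]

variable {L : ℕ} [NeZero L]

def SiteSet (J q : ℝ) (s t : Fin 4 → Cfg L) (y : Site L) : Set ℝ :=
  Set.Icc 0 1 ∩ ⋂ i : Fin 4, Iset (pp J q (s i) y) (t i y)

def CSet (J q : ℝ) (s t : Fin 4 → Cfg L) : Set (Site L → ℝ) :=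
  Set.univ.pi (SiteSet J q s t)

lemma CSet_measurable (J q : ℝ) (s t : Fin 4 → Cfg L) : MeasurableSet (CSet J q s t) :=
  MeasurableSet.univ_pi fun y =>
    measurableSet_Icc.inter (MeasurableSet.iInter fun i => Iset_measurable _ _)

lemma CSet_vol_ne_top (J q : ℝ) (s t : Fin 4 → Cfg L) : volume (CSet J q s t) ≠ ⊤ := by
  have hsub : CSet J q s t ⊆ Set.univ.pi fun _ : Site L => Set.Icc (0:ℝ) 1 := by
    intro u hu y hy
    exact (hu y hy).1
  have hbox : volume (Set.univ.pi fun _ : Site L => Set.Icc (0:ℝ) 1) = 1 := by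
    rw [volume_pi_pi]
    simp [Real.volume_Icc]
  exact ((measure_mono hsub).trans_lt (by rw [hbox]; exact ENNReal.one_lt_top)).ne

def Kmat (J q : ℝ) (s t : Fin 4 → Cfg L) : ℝ := (volume (CSet J q s t)).toReal

lemma Kmat_nonneg (J q : ℝ) (s t : Fin 4 → Cfg L) : 0 ≤ Kmat J q s t :=
  ENNReal.toReal_nonneg

lemma CSet_disjoint (J q : ℝ) (s : Fin 4 → Cfg L) {t t' : Fin 4 → Cfg L} (h : t ≠ t') :
    Disjoint (CSet J q s t) (CSet J q s t') := by
  have hex : ∃ i y, t i y ≠ t' i y := by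
    by_contra hc
    push_neg at hc
    exact h (funext fun i => funext fun y => hc i y)
  obtain ⟨i, y, hiy⟩ := hex
  rw [Set.disjoint_left]
  intro u hu hu'
  have h1 : u y ∈ Iset (pp J q (s i) y) (t i y) :=
    Set.mem_iInter.1 (hu y (Set.mem_univ y)).2 i
  have h2 : u y ∈ Iset (pp J q (s i) y) (t' i y) :=
    Set.mem_iInter.1 (hu' y (Set.mem_univ y)).2 i
  exact hiy ((mem_Iset_iff.1 h1).symm.trans (mem_Iset_iff.1 h2))

lemma Kmat_marginal (J q : ℝ) (s : Fin 4 → Cfg L) (i : Fin 4) (τ : Cfg L) :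
    ∑ t ∈ Finset.univ.filter (fun t : Fin 4 → Cfg L => t i = τ), Kmat J q s t
      = Ptrans L J q (s i) τ := by
  classical
  set F := Finset.univ.filter (fun t : Fin 4 → Cfg L => t i = τ) with hF
  have hdisj : (F : Set (Fin 4 → Cfg L)).PairwiseDisjoint (CSet J q s) :=
    fun a _ b _ hab => CSet_disjoint J q s hab
  have hsum : volume (⋃ t ∈ F, CSet J q s t) = ∑ t ∈ F, volume (CSet J q s t) :=
    measure_biUnion_finset hdisj fun t _ => CSet_measurable J q s t
  have hun : ⋃ t ∈ F, CSet J q s t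
      = Set.univ.pi fun y => Set.Icc 0 1 ∩ Iset (pp J q (s i) y) (τ y) := by
    ext u
    simp only [Set.mem_iUnion, exists_prop]
    constructor
    · rintro ⟨t, htF, hu⟩
      have hti : t i = τ := (Finset.mem_filter.1 htF).2
      intro y _
      refine ⟨(hu y (Set.mem_univ y)).1, ?_⟩
      have := Set.mem_iInter.1 (hu y (Set.mem_univ y)).2 i
      rwa [hti] at this
    · intro hu
      refine ⟨fun j y => decide (u y < pp J q (s j) y), ?_, ?_⟩
      · rw [hF, Finset.mem_filter]
        refine ⟨Finset.mem_univ _, funext fun y => ?_⟩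
        exact mem_Iset_iff.1 (hu y (Set.mem_univ y)).2
      · intro y _
        refine ⟨(hu y (Set.mem_univ y)).1, Set.mem_iInter.2 fun j => ?_⟩
        exact mem_Iset_iff.2 rfl
  have hval : volume (Set.univ.pi fun y => Set.Icc 0 1 ∩ Iset (pp J q (s i) y) (τ y))
      = ∏ y : Site L, ENNReal.ofReal (wgt J q (s i) y (τ y)) := by
    rw [volume_pi_pi]
    apply Finset.prod_congr rfl
    intro y _
    have hp0 := pp_pos J q (s i) y
    have hp1 := pp_lt_one J q (s i) y
    cases hb : τ y
    · have : Set.Icc (0:ℝ) 1 ∩ Iset (pp J q (s i) y) false = Set.Icc (pp J q (s i) y) 1 := by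
        ext v
        simp only [Iset, if_neg (by simp : ¬(false = true)), Set.mem_inter_iff, Set.mem_Icc,
          Set.mem_Ici]
        constructor
        · rintro ⟨⟨_, h1⟩, h2⟩; exact ⟨h2, h1⟩
        · rintro ⟨h1, h2⟩; exact ⟨⟨le_trans hp0.le h1, h2⟩, h1⟩
      rw [this, Real.volume_Icc, wgt, if_neg (by simp : ¬(false = true))]
    · have : Set.Icc (0:ℝ) 1 ∩ Iset (pp J q (s i) y) true = Set.Ico 0 (pp J q (s i) y) := by
        ext v
        simp only [Iset, if_pos rfl, Set.mem_inter_iff, Set.mem_Icc, Set.mem_Ico, Set.mem_Iio]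
        constructor
        · rintro ⟨⟨h0, _⟩, h2⟩; exact ⟨h0, h2⟩
        · rintro ⟨h0, h2⟩; exact ⟨⟨h0, le_of_lt (lt_of_lt_of_le h2 hp1.le)⟩, h2⟩
      rw [this, Real.volume_Ico, wgt, if_pos rfl, sub_zero]
  have final : ∑ t ∈ F, Kmat J q s t = ((∑ t ∈ F, volume (CSet J q s t))).toReal := by
    rw [ENNReal.toReal_sum fun t _ => CSet_vol_ne_top J q s t]
    rfl
  rw [final, ← hsum, hun, hval, ENNReal.toReal_prod, Ptrans_prod]
  apply Finset.prod_congr rfl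
  intro y _
  rw [ENNReal.toReal_ofReal (wgt_nonneg J q (s i) y (τ y))]

lemma Kmat_zero_of_unordered {J q : ℝ} (hJ : 0 < J) (hq : 0 < q) {s t : Fin 4 → Cfg L}
    {i j : Fin 4} (hs : cle (s i) (s j)) {y : Site L}
    (hti : t i y = true) (htj : t j y = false) : Kmat J q s t = 0 := by
  have hempty : SiteSet J q s t y = ∅ := by
    ext v
    simp only [SiteSet, Set.mem_inter_iff, Set.mem_empty_iff_false, iff_false]
    rintro ⟨_, hmem⟩
    have h1 := Set.mem_iInter.1 hmem i
    have h2 := Set.mem_iInter.1 hmem j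
    rw [hti] at h1
    rw [htj] at h2
    simp only [Iset, if_pos rfl, Set.mem_Iio] at h1
    simp only [Iset, if_neg (by simp : ¬(false = true)), Set.mem_Ici] at h2
    exact absurd (lt_of_lt_of_le h1 (pp_mono hJ hq hs y)) (not_lt.2 h2)
  rw [Kmat, CSet, Set.univ_pi_eq_empty hempty]
  simp

lemma Kmat_zero_of_diag {J q : ℝ} (hJ : 0 < J) (hq : 0 < q) {s t : Fin 4 → Cfg L}
    {i j : Fin 4} (hs : s i = s j) (ht : t i ≠ t j) : Kmat J q s t = 0 := by
  have hex : ∃ y, t i y ≠ t j y := by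
    by_contra hc
    push_neg at hc
    exact ht (funext hc)
  obtain ⟨y, hy⟩ := hex
  have hle1 : cle (s i) (s j) := by rw [hs]; exact cle_refl _
  have hle2 : cle (s j) (s i) := by rw [hs]; exact cle_refl _
  cases hb : t i y
  · cases hb' : t j y
    · rw [hb, hb'] at hy; exact absurd rfl hy
    · exact Kmat_zero_of_unordered hJ hq hle2 hb' hb
  · cases hb' : t j y
    · exact Kmat_zero_of_unordered hJ hq hle1 hb hb'
    · rw [hb, hb'] at hy; exact absurd rfl hy

/-- the n-step coupled kernel -/
def Kn (J q : ℝ) : ℕ → (Fin 4 → Cfg L) → (Fin 4 → Cfg L) → ℝ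
  | 0, s, t => if s = t then 1 else 0
  | n+1, s, t => ∑ r : Fin 4 → Cfg L, Kmat J q s r * Kn J q n r t

lemma Kn_nonneg (J q : ℝ) (n : ℕ) (s t : Fin 4 → Cfg L) : 0 ≤ Kn J q n s t := by
  induction n generalizing s t with
  | zero => rw [Kn]; split <;> norm_num
  | succ n ih =>
    rw [Kn]
    exact Finset.sum_nonneg fun r _ => mul_nonneg (Kmat_nonneg J q s r) (ih r t)

lemma Kn_marginal (J q : ℝ) (n : ℕ) (s : Fin 4 → Cfg L) (i : Fin 4) (τ : Cfg L) :
    ∑ t ∈ Finset.univ.filter (fun t : Fin 4 → Cfg L => t i = τ), Kn J q n s t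
      = (Pmat L J q ^ n) (s i) τ := by
  induction n generalizing s with
  | zero =>
    simp only [Kn, pow_zero, Matrix.one_apply]
    rw [Finset.sum_ite_eq]
    simp only [Finset.mem_filter, Finset.mem_univ, true_and]
  | succ n ih =>
    simp only [Kn]
    rw [Finset.sum_comm]
    have step1 : ∀ r : Fin 4 → Cfg L,
        ∑ t ∈ Finset.univ.filter (fun t : Fin 4 → Cfg L => t i = τ), Kmat J q s r * Kn J q n r t
          = Kmat J q s r * (Pmat L J q ^ n) (r i) τ := by
      intro r
      rw [← Finset.mul_sum, ih r]
    rw [Finset.sum_congr rfl fun r _ => step1 r]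
    rw [← Finset.sum_fiberwise Finset.univ (fun r : Fin 4 → Cfg L => r i)
      (fun r => Kmat J q s r * (Pmat L J q ^ n) (r i) τ)]
    have step2 : ∀ ρ : Cfg L,
        ∑ r ∈ Finset.univ.filter (fun r : Fin 4 → Cfg L => r i = ρ),
            Kmat J q s r * (Pmat L J q ^ n) (r i) τ
          = Ptrans L J q (s i) ρ * (Pmat L J q ^ n) ρ τ := by
      intro ρ
      rw [Finset.sum_congr rfl (fun r hr => by
        rw [(Finset.mem_filter.1 hr).2])]
      rw [← Finset.sum_mul, Kmat_marginal]
    rw [Finset.sum_congr rfl fun ρ _ => step2 ρ]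
    rw [pow_succ', Matrix.mul_apply]
    rfl

lemma Kn_diag {J q : ℝ} (hJ : 0 < J) (hq : 0 < q) (n : ℕ) {s t : Fin 4 → Cfg L}
    (hs : s 1 = s 2) (ht : t 1 ≠ t 2) : Kn J q n s t = 0 := by
  induction n generalizing s with
  | zero =>
    rw [Kn, if_neg]
    intro h
    rw [h] at hs
    exact ht hs
  | succ n ih =>
    rw [Kn]
    apply Finset.sum_eq_zero
    intro r _
    by_cases hr : r 1 = r 2
    · rw [ih hr, mul_zero]
    · rw [Kmat_zero_of_diag hJ hq hs hr, zero_mul]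

end Stmt13Aux
namespace Stmt13Aux

variable {L : ℕ} [NeZero L]

def Gfun (L : ℕ) [NeZero L] (J q : ℝ) (n : ℕ) (σ : Cfg L) : ℝ :=
  if h : σ = plusCfg L then 0
  else ∑ τ : {σ' : Cfg L // σ' ≠ plusCfg L}, (Qmat L J q ^ n) ⟨σ, h⟩ τ

lemma Qpow_nonneg (J q : ℝ) (n : ℕ) (a b : {σ : Cfg L // σ ≠ plusCfg L}) :
    0 ≤ (Qmat L J q ^ n) a b := by
  induction n generalizing a b with
  | zero =>
    rw [pow_zero, Matrix.one_apply]
    split <;> norm_num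
  | succ n ih =>
    rw [pow_succ', Matrix.mul_apply]
    exact Finset.sum_nonneg fun c _ =>
      mul_nonneg (Ptrans_nonneg J q a.1 c.1) (ih c b)

lemma Gfun_nonneg (J q : ℝ) (n : ℕ) (σ : Cfg L) : 0 ≤ Gfun L J q n σ := by
  rw [Gfun]
  split
  · exact le_refl 0
  · exact Finset.sum_nonneg fun τ _ => Qpow_nonneg J q n _ τ

lemma Gfun_sub (J q : ℝ) (n : ℕ) (ρ' : {σ' : Cfg L // σ' ≠ plusCfg L}) :
    Gfun L J q n ρ'.1 = ∑ τ : {σ' : Cfg L // σ' ≠ plusCfg L}, (Qmat L J q ^ n) ρ' τ := by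
  rw [Gfun, dif_neg ρ'.2]

lemma Gfun_succ (J q : ℝ) (n : ℕ) {σ : Cfg L} (h : σ ≠ plusCfg L) :
    Gfun L J q (n+1) σ = ∑ ρ : Cfg L, Ptrans L J q σ ρ * Gfun L J q n ρ := by
  rw [Gfun, dif_neg h]
  have step : ∀ τ : {σ' : Cfg L // σ' ≠ plusCfg L},
      (Qmat L J q ^ (n+1)) ⟨σ, h⟩ τ
        = ∑ ρ' : {σ' : Cfg L // σ' ≠ plusCfg L},
            Ptrans L J q σ ρ'.1 * (Qmat L J q ^ n) ρ' τ := by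
    intro τ
    rw [pow_succ', Matrix.mul_apply]
    rfl
  rw [Finset.sum_congr rfl fun τ _ => step τ, Finset.sum_comm]
  have inner : ∀ ρ' : {σ' : Cfg L // σ' ≠ plusCfg L},
      ∑ τ : {σ' : Cfg L // σ' ≠ plusCfg L}, Ptrans L J q σ ρ'.1 * (Qmat L J q ^ n) ρ' τ
        = Ptrans L J q σ ρ'.1 * Gfun L J q n ρ'.1 := by
    intro ρ'
    rw [← Finset.mul_sum, Gfun_sub]
  rw [Finset.sum_congr rfl fun ρ' _ => inner ρ']
  rw [← Finset.sum_subtype (Finset.univ.filter (fun ρ : Cfg L => ρ ≠ plusCfg L))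
    (by intro x; simp) (fun ρ : Cfg L => Ptrans L J q σ ρ * Gfun L J q n ρ)]
  apply Finset.sum_filter_of_ne
  intro ρ _ hne hρ
  apply hne
  rw [Gfun, dif_pos hρ, mul_zero]

def ordered (s : Fin 4 → Cfg L) : Prop :=
  cle (s 0) (s 1) ∧ cle (s 0) (s 2) ∧ cle (s 1) (s 3) ∧ cle (s 2) (s 3)

lemma Kmat_pres_cle {J q : ℝ} (hJ : 0 < J) (hq : 0 < q) {s r : Fin 4 → Cfg L}
    (hK : Kmat J q s r ≠ 0) {i j : Fin 4} (h : cle (s i) (s j)) : cle (r i) (r j) := by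
  intro y hy
  by_contra hb
  have hb' : r j y = false := by
    cases hbb : r j y
    · rfl
    · exact absurd hbb hb
  exact hK (Kmat_zero_of_unordered hJ hq h hy hb')

lemma Kmat_pres_ordered {J q : ℝ} (hJ : 0 < J) (hq : 0 < q) {s r : Fin 4 → Cfg L}
    (hK : Kmat J q s r ≠ 0) (hs : ordered s) : ordered r :=
  ⟨Kmat_pres_cle hJ hq hK hs.1, Kmat_pres_cle hJ hq hK hs.2.1,
   Kmat_pres_cle hJ hq hK hs.2.2.1, Kmat_pres_cle hJ hq hK hs.2.2.2⟩

lemma ordered_plus {s : Fin 4 → Cfg L} (hs : ordered s) (h0 : s 0 = plusCfg L) :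
    s 1 = s 2 := by
  have h1 : s 1 = plusCfg L := by
    funext y
    exact hs.1 y (by rw [h0]; rfl)
  have h2 : s 2 = plusCfg L := by
    funext y
    exact hs.2.1 y (by rw [h0]; rfl)
  rw [h1, h2]

lemma main_bound {J q : ℝ} (hJ : 0 < J) (hq : 0 < q) (n : ℕ) (s : Fin 4 → Cfg L)
    (hs : ordered s) :
    ∑ t ∈ Finset.univ.filter (fun t : Fin 4 → Cfg L => t 1 ≠ t 2), Kn J q n s t
      ≤ Gfun L J q n (s 0) := by
  induction n generalizing s with
  | zero =>
    by_cases h0 : s 0 = plusCfg L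
    · have h12 := ordered_plus hs h0
      rw [Finset.sum_eq_zero fun t ht =>
        Kn_diag hJ hq 0 h12 (Finset.mem_filter.1 ht).2]
      exact Gfun_nonneg J q 0 _
    · have hR : Gfun L J q 0 (s 0) = 1 := by
        rw [Gfun, dif_neg h0]
        rw [Finset.sum_congr rfl fun τ _ => by rw [pow_zero, Matrix.one_apply]]
        rw [Finset.sum_ite_eq]
        simp
      rw [hR]
      have : ∀ t ∈ Finset.univ.filter (fun t : Fin 4 → Cfg L => t 1 ≠ t 2),
          Kn J q 0 s t = if s = t then (1:ℝ) else 0 := fun t _ => rfl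
      rw [Finset.sum_congr rfl this, Finset.sum_ite_eq]
      split <;> norm_num
  | succ n ih =>
    by_cases h0 : s 0 = plusCfg L
    · have h12 := ordered_plus hs h0
      rw [Finset.sum_eq_zero fun t ht =>
        Kn_diag hJ hq (n+1) h12 (Finset.mem_filter.1 ht).2]
      exact Gfun_nonneg J q (n+1) _
    · have expand : ∑ t ∈ Finset.univ.filter (fun t : Fin 4 → Cfg L => t 1 ≠ t 2),
          Kn J q (n+1) s t
          = ∑ r : Fin 4 → Cfg L, Kmat J q s r *
              ∑ t ∈ Finset.univ.filter (fun t : Fin 4 → Cfg L => t 1 ≠ t 2), Kn J q n r t := by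
        simp only [Kn]
        rw [Finset.sum_comm]
        exact Finset.sum_congr rfl fun r _ => (Finset.mul_sum _ _ _).symm
      rw [expand]
      have bound : ∑ r : Fin 4 → Cfg L, Kmat J q s r *
            ∑ t ∈ Finset.univ.filter (fun t : Fin 4 → Cfg L => t 1 ≠ t 2), Kn J q n r t
          ≤ ∑ r : Fin 4 → Cfg L, Kmat J q s r * Gfun L J q n (r 0) := by
        apply Finset.sum_le_sum
        intro r _
        by_cases hK : Kmat J q s r = 0
        · rw [hK, zero_mul, zero_mul]
        · exact mul_le_mul_of_nonneg_left (ih r (Kmat_pres_ordered hJ hq hK hs))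
            (Kmat_nonneg J q s r)
      refine bound.trans (le_of_eq ?_)
      rw [← Finset.sum_fiberwise Finset.univ (fun r : Fin 4 → Cfg L => r 0)
        (fun r => Kmat J q s r * Gfun L J q n (r 0))]
      rw [Gfun_succ J q n h0]
      apply Finset.sum_congr rfl
      intro ρ _
      rw [Finset.sum_congr rfl (fun r hr => by rw [(Finset.mem_filter.1 hr).2])]
      rw [← Finset.sum_mul, Kmat_marginal]

lemma tv_le_G {J q : ℝ} (hJ : 0 < J) (hq : 0 < q) (n : ℕ) (σ ρ : Cfg L) :
    tv L (fun τ => (Pmat L J q ^ n) σ τ) (fun τ => (Pmat L J q ^ n) ρ τ)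
      ≤ Gfun L J q n (minusCfg L) := by
  classical
  set s : Fin 4 → Cfg L := fun i =>
    if i = 0 then minusCfg L else if i = 1 then σ else if i = 2 then ρ else plusCfg L with hsdef
  have e0 : s 0 = minusCfg L := by simp [hsdef]
  have e1 : s 1 = σ := by simp [hsdef]
  have e2 : s 2 = ρ := by simp [hsdef]
  have hord : ordered s := by
    refine ⟨?_, ?_, ?_, ?_⟩ <;> intro y hy
    · rw [e0] at hy; exact absurd hy (by simp [minusCfg])
    · rw [e0] at hy; exact absurd hy (by simp [minusCfg])
    · have : s 3 = plusCfg L := by simp [hsdef]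
      rw [this]; rfl
    · have : s 3 = plusCfg L := by simp [hsdef]
      rw [this]; rfl
  have hmain := main_bound hJ hq n s hord
  rw [e0] at hmain
  refine le_trans ?_ hmain
  have marg1 : ∀ τ, (Pmat L J q ^ n) σ τ
      = ∑ t : Fin 4 → Cfg L, (if t 1 = τ then Kn J q n s t else 0) := fun τ => by
    rw [← e1, ← Kn_marginal J q n s 1 τ, Finset.sum_filter]
  have marg2 : ∀ τ, (Pmat L J q ^ n) ρ τ
      = ∑ t : Fin 4 → Cfg L, (if t 2 = τ then Kn J q n s t else 0) := fun τ => by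
    rw [← e2, ← Kn_marginal J q n s 2 τ, Finset.sum_filter]
  have habs : ∀ τ, |(Pmat L J q ^ n) σ τ - (Pmat L J q ^ n) ρ τ|
      ≤ ∑ t : Fin 4 → Cfg L, (if t 1 ≠ t 2 then
          (if t 1 = τ then Kn J q n s t else 0) + (if t 2 = τ then Kn J q n s t else 0)
        else 0) := by
    intro τ
    rw [marg1 τ, marg2 τ, ← Finset.sum_sub_distrib]
    refine (Finset.abs_sum_le_sum_abs _ _).trans (Finset.sum_le_sum ?_)
    intro t _
    by_cases h12 : t 1 = t 2
    · rw [if_neg (not_not.2 h12), h12, sub_self, abs_zero]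
    · rw [if_pos h12]
      have ha : (0:ℝ) ≤ if t 1 = τ then Kn J q n s t else 0 := by
        split
        · exact Kn_nonneg J q n s t
        · exact le_refl 0
      have hb : (0:ℝ) ≤ if t 2 = τ then Kn J q n s t else 0 := by
        split
        · exact Kn_nonneg J q n s t
        · exact le_refl 0
      refine (abs_sub _ _).trans ?_
      rw [abs_of_nonneg ha, abs_of_nonneg hb]
  have swap : ∑ τ : Cfg L, ∑ t : Fin 4 → Cfg L, (if t 1 ≠ t 2 then
        (if t 1 = τ then Kn J q n s t else 0) + (if t 2 = τ then Kn J q n s t else 0)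
      else 0)
      = ∑ t ∈ Finset.univ.filter (fun t : Fin 4 → Cfg L => t 1 ≠ t 2),
          2 * Kn J q n s t := by
    rw [Finset.sum_comm]
    rw [Finset.sum_congr rfl (fun t _ => ?_)]
    · rw [Finset.sum_filter]
    · by_cases h12 : t 1 = t 2
      · rw [Finset.sum_congr rfl fun τ _ => if_neg (not_not.2 h12), Finset.sum_const_zero,
          if_neg (not_not.2 h12)]
      · rw [Finset.sum_congr rfl fun τ _ => if_pos h12, if_pos h12, Finset.sum_add_distrib]
        rw [show ∀ (i : Fin 4), (∑ τ : Cfg L, if t i = τ then Kn J q n s t else 0)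
            = Kn J q n s t from fun i => by rw [Finset.sum_ite_eq]; simp]
        rw [show ∀ (i : Fin 4), (∑ τ : Cfg L, if t i = τ then Kn J q n s t else 0)
            = Kn J q n s t from fun i => by rw [Finset.sum_ite_eq]; simp]
        ring
  rw [tv]
  calc (1/2) * ∑ τ : Cfg L, |(Pmat L J q ^ n) σ τ - (Pmat L J q ^ n) ρ τ|
      ≤ (1/2) * ∑ τ : Cfg L, ∑ t : Fin 4 → Cfg L, (if t 1 ≠ t 2 then
          (if t 1 = τ then Kn J q n s t else 0) + (if t 2 = τ then Kn J q n s t else 0)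
        else 0) := by
        apply mul_le_mul_of_nonneg_left (Finset.sum_le_sum fun τ _ => habs τ) (by norm_num)
    _ = ∑ t ∈ Finset.univ.filter (fun t : Fin 4 → Cfg L => t 1 ≠ t 2), Kn J q n s t := by
        rw [swap, Finset.mul_sum]
        apply Finset.sum_congr rfl
        intro t _
        ring

end Stmt13Aux
open Stmt13Aux in
/-- For every `L ≥ 2`, `J, q > 0` and every `n ≥ 0`, the distance to
stationarity of the PCA is bounded by the tail of the hitting time of `+1` started from
`−1`: `sup_σ ‖P^n(σ,·) − π_PCA‖_TV ≤ ∑_{τ≠1} Q^n(−1,τ)`. -/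
theorem stmt13 (L : ℕ) [NeZero L] (hL : 2 ≤ L) (J q : ℝ) (hJ : 0 < J) (hq : 0 < q)
    (n : ℕ) :
    (⨆ σ : Cfg L, tv L (fun τ => (Pmat L J q ^ n) σ τ) (piPCA L J q))
      ≤ ∑ τ : {σ : Cfg L // σ ≠ plusCfg L},
          (Qmat L J q ^ n) ⟨minusCfg L, minus_ne_plus L⟩ τ := by
  classical
  have hG : Gfun L J q n (minusCfg L)
      = ∑ τ : {σ : Cfg L // σ ≠ plusCfg L},
          (Qmat L J q ^ n) ⟨minusCfg L, minus_ne_plus L⟩ τ := by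
    rw [Gfun, dif_neg (minus_ne_plus L)]
  rw [← hG]
  apply ciSup_le
  intro σ
  have hdiff : ∀ τ : Cfg L, (Pmat L J q ^ n) σ τ - piPCA L J q τ
      = ∑ ρ : Cfg L, piPCA L J q ρ * ((Pmat L J q ^ n) σ τ - (Pmat L J q ^ n) ρ τ) := by
    intro τ
    have h1 : ∑ ρ : Cfg L, piPCA L J q ρ * ((Pmat L J q ^ n) σ τ - (Pmat L J q ^ n) ρ τ)
        = (∑ ρ : Cfg L, piPCA L J q ρ * (Pmat L J q ^ n) σ τ)
          - ∑ ρ : Cfg L, piPCA L J q ρ * (Pmat L J q ^ n) ρ τ := by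
      rw [← Finset.sum_sub_distrib]
      exact Finset.sum_congr rfl fun ρ _ => mul_sub _ _ _
    rw [h1, ← Finset.sum_mul, piPCA_sum, one_mul, statn]
  have step1 : tv L (fun τ => (Pmat L J q ^ n) σ τ) (piPCA L J q)
      ≤ ∑ ρ : Cfg L, piPCA L J q ρ
          * tv L (fun τ => (Pmat L J q ^ n) σ τ) (fun τ => (Pmat L J q ^ n) ρ τ) := by
    rw [tv]
    calc (1/2) * ∑ τ : Cfg L, |(Pmat L J q ^ n) σ τ - piPCA L J q τ|
        ≤ (1/2) * ∑ τ : Cfg L, ∑ ρ : Cfg L,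
            piPCA L J q ρ * |(Pmat L J q ^ n) σ τ - (Pmat L J q ^ n) ρ τ| := by
          apply mul_le_mul_of_nonneg_left ?_ (by norm_num)
          apply Finset.sum_le_sum
          intro τ _
          rw [hdiff τ]
          refine (Finset.abs_sum_le_sum_abs _ _).trans (le_of_eq ?_)
          apply Finset.sum_congr rfl
          intro ρ _
          rw [abs_mul, abs_of_nonneg (piPCA_nonneg J q ρ)]
      _ = ∑ ρ : Cfg L, piPCA L J q ρ
            * tv L (fun τ => (Pmat L J q ^ n) σ τ) (fun τ => (Pmat L J q ^ n) ρ τ) := by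
          rw [Finset.sum_comm, Finset.mul_sum]
          apply Finset.sum_congr rfl
          intro ρ _
          rw [tv, ← Finset.mul_sum]
          ring
  refine step1.trans ?_
  calc ∑ ρ : Cfg L, piPCA L J q ρ
        * tv L (fun τ => (Pmat L J q ^ n) σ τ) (fun τ => (Pmat L J q ^ n) ρ τ)
      ≤ ∑ ρ : Cfg L, piPCA L J q ρ * Gfun L J q n (minusCfg L) := by
        apply Finset.sum_le_sum
        intro ρ _
        exact mul_le_mul_of_nonneg_left (tv_le_G hJ hq n σ ρ) (piPCA_nonneg J q ρ)
    _ = Gfun L J q n (minusCfg L) := by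
        rw [← Finset.sum_mul, piPCA_sum, one_mul]
end
end

section
/- Diagonal configurations are stable under the zero-temperature dynamics and move in the NE direction: for every L ≥ 2 and all parameters J, q with 0 < q < 2J, if the initial configuration σ is diagonal (constant on each diagonal D_m) and u : Λ × {1,...,N} → (0,1) satisfies u_x(m) ∈ (ε_L, 1 − ε_L) for all x ∈ Λ and 1 ≤ m ≤ N, where ε_L = e^{−2J+q}/(2 cosh(2J−q)), then for every n ≤ N the trajectory configuration σ(n) is diagonal, and its constant value on the diagonal D_m equals the value of σ on the diagonal D_{m−n} (indices mod L). -/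
open Real Filter MeasureTheory

noncomputable section

/-- The local field `a_x = J(σ_{x^d} + σ_{x^l}) + q σ_x` at site `x`. -/
def localField (L : ℕ) [NeZero L] (J q : ℝ) (σ : Cfg L) (x : Site L) : ℝ :=
  J * (spin (σ (dnN x)) + spin (σ (lfN x))) + q * spin (σ x)

/-- One step of the deterministic update rule driven by the numbers `u : Λ → (0,1)`:
`σ_x` becomes `+1` iff `u_x ≤ e^{a_x}/(2 cosh a_x)`. -/
def stepCfg (L : ℕ) [NeZero L] (J q : ℝ) (u : Site L → ℝ) (σ : Cfg L) : Cfg L :=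
  fun x =>
    if u x ≤ Real.exp (localField L J q σ x) / (2 * Real.cosh (localField L J q σ x))
      then true else false

/-- The trajectory of the PCA built from the numbers `u : Λ × {1,2,...} → (0,1)` and the
initial configuration `σ(0) = σ`; the update from time `n` to `n+1` uses `u · (n+1)`. -/
def traj (L : ℕ) [NeZero L] (J q : ℝ) (u : Site L → ℕ → ℝ) (σ : Cfg L) : ℕ → Cfg L
  | 0 => σ
  | n + 1 => stepCfg L J q (fun x => u x (n + 1)) (traj L J q u σ n)

/-- `ε = e^{−2J+q}/(2 cosh(2J−q))`: uniform numbers in `(ε, 1−ε)` produce no atypical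
updating. -/
def epsJq (J q : ℝ) : ℝ :=
  Real.exp (-(2 * J) + q) / (2 * Real.cosh (2 * J - q))

lemma fmono {a b : ℝ} (h : a ≤ b) :
    Real.exp a / (2 * Real.cosh a) ≤ Real.exp b / (2 * Real.cosh b) := by
  have ha : (0:ℝ) < 2 * Real.cosh a := by positivity
  have hb : (0:ℝ) < 2 * Real.cosh b := by positivity
  rw [div_le_div_iff₀ ha hb, Real.cosh_eq, Real.cosh_eq]
  have h1 : Real.exp a * Real.exp (-b) ≤ Real.exp b * Real.exp (-a) := by
    rw [← Real.exp_add, ← Real.exp_add]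
    exact Real.exp_le_exp.2 (by linarith)
  nlinarith [Real.exp_pos a, Real.exp_pos b]

lemma eps_eq (J q : ℝ) :
    epsJq J q = Real.exp (-(2*J - q)) / (2 * Real.cosh (2*J - q)) := by
  unfold epsJq
  ring_nf

lemma one_sub_eps (J q : ℝ) :
    1 - epsJq J q = Real.exp (2*J - q) / (2 * Real.cosh (2*J - q)) := by
  have hc : (0:ℝ) < 2 * Real.cosh (2*J - q) := by positivity
  rw [eps_eq, eq_div_iff (ne_of_gt hc), Real.cosh_eq, Real.exp_neg]
  have he := Real.exp_pos (2*J - q)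
  field_simp
  ring

/-- Diagonal configurations are stable under the zero-temperature
dynamics and move in the NE direction: for `L ≥ 2`, `0 < q < 2J`, if `σ` is constant on
each NW–SE diagonal and all numbers `u_x(m)`, `1 ≤ m ≤ N`, lie in `(ε_L, 1 − ε_L)`, then
for every `n ≤ N` the configuration `σ(n)` is diagonal, its value at a site `x` of the
diagonal `D_m` being the value of `σ` on the diagonal `D_{m−n}` (e.g. at the site
`(x₁ − n, x₂) ∈ D_{m−n}`). -/
theorem stmt18 (L : ℕ) [NeZero L] (hL : 2 ≤ L) (J q : ℝ) (hq : 0 < q) (hqJ : q < 2 * J)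
    (σ : Cfg L) (hdiag : ∀ x y : Site L, x.1 + x.2 = y.1 + y.2 → σ x = σ y)
    (N : ℕ) (u : Site L → ℕ → ℝ)
    (hu : ∀ x : Site L, ∀ m : ℕ, 1 ≤ m → m ≤ N →
      u x m ∈ Set.Ioo (epsJq J q) (1 - epsJq J q)) :
    ∀ n : ℕ, n ≤ N → ∀ x : Site L,
      traj L J q u σ n x = σ (x.1 - (n : ZMod L), x.2) := by
  intro n
  induction n with
  | zero => intro _ x; simp [traj]
  | succ n ih =>
    intro hn x
    have ihn := ih (by omega)
    have huxn := hu x (n+1) (by omega) hn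
    obtain ⟨hul, hur⟩ := huxn
    have hb : σ (x.1 - (n:ZMod L), x.2 - 1) = σ (x.1 - ((n+1 : ℕ):ZMod L), x.2) :=
      hdiag _ _ (by push_cast; ring)
    have hb2 : σ (x.1 - 1 - (n:ZMod L), x.2) = σ (x.1 - ((n+1 : ℕ):ZMod L), x.2) :=
      hdiag _ _ (by push_cast; ring)
    have hlf : localField L J q (traj L J q u σ n) x
        = 2 * J * spin (σ (x.1 - ((n+1 : ℕ):ZMod L), x.2))
          + q * spin (σ (x.1 - (n:ZMod L), x.2)) := by
      unfold localField dnN lfN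
      rw [ihn (x.1, x.2 - 1), ihn (x.1 - 1, x.2), ihn x]
      simp only [hb, hb2]
      ring
    have hs : spin (σ (x.1 - (n:ZMod L), x.2)) = 1 ∨
        spin (σ (x.1 - (n:ZMod L), x.2)) = -1 := by
      cases σ (x.1 - (n:ZMod L), x.2) <;> simp [spin]
    show stepCfg L J q (fun y => u y (n+1)) (traj L J q u σ n) x = _
    unfold stepCfg
    rcases hbv : σ (x.1 - ((n+1 : ℕ):ZMod L), x.2) with _ | _
    · -- target false
      have hae : localField L J q (traj L J q u σ n) x ≤ -(2*J - q) := by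
        rcases hs with h | h <;> rw [hlf, hbv, h] <;> simp [spin] <;> linarith
      have hfa : Real.exp (localField L J q (traj L J q u σ n) x)
          / (2 * Real.cosh (localField L J q (traj L J q u σ n) x)) ≤ epsJq J q := by
        have h2 := fmono hae
        rw [Real.cosh_neg] at h2
        rw [eps_eq]
        exact h2
      rw [if_neg (by push_neg; linarith)]
    · -- target true
      have hae : (2*J - q) ≤ localField L J q (traj L J q u σ n) x := by
        rcases hs with h | h <;> rw [hlf, hbv, h] <;> simp [spin] <;> linarith
      have hfa : 1 - epsJq J q ≤ Real.exp (localField L J q (traj L J q u σ n) x)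
          / (2 * Real.cosh (localField L J q (traj L J q u σ n) x)) := by
        rw [one_sub_eps]; exact fmono hae
      rw [if_pos (by linarith)]
end
end
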